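/- arXiv:1410.3155 — 8 statements merged into one kernel-verified Lean document; each statement's English description precedes it below -/
import Mathlib

section
/- For every real number a < 1 with a ≠ 0 and all integers 1 ≤ l ≤ n, the generalized Stirling number satisfies S_a(n,l) = (1/(l!·a^l)) · Σ_{k=0}^{l} (−1)^k · C(l,k) · ∏_{i=0}^{n−1} (i − a·k), where C(l,k) is the binomial coefficient. -/
open scoped Classical BigOperators

open Finset PowerSeries

private lemma smeval_descPochhammer_real (x : ℝ) (n : ℕ) :
    (descPochhammer ℤ n).smeval x = ∏ i ∈ range n, (x - i) := by
  induction n with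
  | zero => simp [descPochhammer_zero, Polynomial.smeval_one]
  | succ n ih =>
    rw [descPochhammer_succ_right, Polynomial.smeval_mul, ih, prod_range_succ]
    congr 1
    rw [Polynomial.smeval_sub, Polynomial.smeval_X, Polynomial.smeval_natCast]
    simp

private lemma fact_mul_rchoose (x : ℝ) (m : ℕ) :
    (m.factorial : ℝ) * Ring.choose x m = ∏ i ∈ range m, (x - i) := by
  have h := Ring.descPochhammer_eq_factorial_smul_choose (R := ℝ) x m
  rw [smeval_descPochhammer_real] at h
  rw [h, nsmul_eq_mul]

private lemma rchoose_eq (x : ℝ) (m : ℕ) :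
    Ring.choose x m = (∏ i ∈ range m, (x - i)) / m.factorial := by
  rw [← fact_mul_rchoose]
  field_simp [Nat.factorial_ne_zero]

private lemma prod_sign (x : ℝ) (m : ℕ) :
    ∏ i ∈ range m, ((i : ℝ) - x) = (-1) ^ m * ∏ i ∈ range m, (x - i) := by
  calc ∏ i ∈ range m, ((i : ℝ) - x) = ∏ i ∈ range m, (-1) * (x - i) := by
        apply prod_congr rfl; intros; ring
    _ = (-1) ^ m * ∏ i ∈ range m, (x - i) := by
        rw [prod_mul_distrib, prod_const, card_range]

private noncomputable def binSeries (x : ℝ) : PowerSeries ℝ :=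
  PowerSeries.mk fun m => (-1 : ℝ) ^ m * Ring.choose x m

private lemma coeff_binSeries (x : ℝ) (m : ℕ) :
    (PowerSeries.coeff m) (binSeries x) = (-1 : ℝ) ^ m * Ring.choose x m :=
  coeff_mk _ _

private lemma binSeries_mul (x y : ℝ) :
    binSeries x * binSeries y = binSeries (x + y) := by
  ext n
  rw [PowerSeries.coeff_mul]
  simp only [coeff_binSeries]
  rw [Ring.add_choose_eq n (Commute.all x y), Finset.mul_sum]
  apply Finset.sum_congr rfl
  intro p hp
  have h : p.1 + p.2 = n := Finset.HasAntidiagonal.mem_antidiagonal.mp hp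
  rw [← h, pow_add]
  ring

private lemma binSeries_zero : binSeries 0 = 1 := by
  ext n
  cases n with
  | zero => simp [coeff_binSeries, Ring.choose_zero_right]
  | succ n => simp [coeff_binSeries, Ring.choose_zero_succ]

private lemma binSeries_pow (x : ℝ) (k : ℕ) :
    binSeries x ^ k = binSeries (x * k) := by
  induction k with
  | zero => simp [binSeries_zero]
  | succ k ih =>
    rw [pow_succ, ih, binSeries_mul]
    push_cast
    ring_nf

private lemma coeff_pow_tuple (φ : PowerSeries ℝ) (l n : ℕ) :
    PowerSeries.coeff n (φ ^ l) =
      ∑ f ∈ Finset.Nat.antidiagonalTuple l n, ∏ i, PowerSeries.coeff (f i) φ := by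
  induction l generalizing n with
  | zero =>
    cases n with
    | zero => simp
    | succ n => simp
  | succ l ih =>
    rw [pow_succ, mul_comm, PowerSeries.coeff_mul]
    simp_rw [ih, Finset.mul_sum]
    rw [Finset.sum_sigma']
    refine Finset.sum_nbij' (fun x => Fin.cons x.1.1 x.2)
      (fun g => ⟨(g 0, ∑ i : Fin l, g i.succ), Fin.tail g⟩) ?_ ?_ ?_ ?_ ?_
    · rintro ⟨⟨p1, p2⟩, f⟩ hx
      simp only [Finset.mem_sigma, Finset.HasAntidiagonal.mem_antidiagonal,
        Finset.Nat.mem_antidiagonalTuple] at hx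
      rw [Finset.Nat.mem_antidiagonalTuple, Fin.sum_cons, hx.2, hx.1]
    · intro g hg
      rw [Finset.Nat.mem_antidiagonalTuple] at hg
      simp only [Finset.mem_sigma, Finset.HasAntidiagonal.mem_antidiagonal,
        Finset.Nat.mem_antidiagonalTuple]
      constructor
      · rw [← hg, Fin.sum_univ_succ]
      · rfl
    · rintro ⟨⟨p1, p2⟩, f⟩ hx
      simp only [Finset.mem_sigma, Finset.HasAntidiagonal.mem_antidiagonal,
        Finset.Nat.mem_antidiagonalTuple] at hx
      refine Sigma.ext ?_ ?_
      · simp [Fin.cons_zero, Fin.cons_succ, hx.2]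
      · simp [Fin.tail_cons]
    · intro g hg
      simp [Fin.cons_self_tail]
    · rintro ⟨⟨p1, p2⟩, f⟩ hx
      simp only [Fin.prod_univ_succ, Fin.cons_zero, Fin.cons_succ]

private lemma filter_pos_sum (l n : ℕ) (c : ℕ → ℝ) :
    ∑ f ∈ (Finset.Nat.antidiagonalTuple l n).filter (fun f => ∀ k, 0 < f k),
        ∏ k, c (f k)
      = ∑ f ∈ Finset.Nat.antidiagonalTuple l n,
          ∏ k, (if f k = 0 then 0 else c (f k)) := by
  rw [← Finset.sum_filter_add_sum_filter_not (Finset.Nat.antidiagonalTuple l n)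
    (fun f => ∀ k, 0 < f k) (fun f => ∏ k, (if f k = 0 then 0 else c (f k)))]
  have h2 : ∑ f ∈ (Finset.Nat.antidiagonalTuple l n).filter
      (fun f => ¬ ∀ k, 0 < f k), ∏ k, (if f k = 0 then 0 else c (f k)) = 0 := by
    apply Finset.sum_eq_zero
    intro f hf
    rw [Finset.mem_filter] at hf
    push_neg at hf
    obtain ⟨k, hk⟩ := hf.2
    exact Finset.prod_eq_zero (Finset.mem_univ k) (by simp [Nat.le_zero.mp hk])
  rw [h2, add_zero]
  apply Finset.sum_congr rfl
  intro f hf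
  rw [Finset.mem_filter] at hf
  apply Finset.prod_congr rfl
  intro k _
  rw [if_neg (Nat.pos_iff_ne_zero.mp (hf.2 k))]

private lemma gamma_prod (a : ℝ) (ha : a < 1) (m : ℕ) :
    Real.Gamma ((m : ℝ) + 1 - a) = Real.Gamma (1 - a) * ∏ j ∈ range m, ((j : ℝ) + 1 - a) := by
  induction m with
  | zero => simp
  | succ m ih =>
    have h : (m : ℝ) + 1 - a ≠ 0 := by
      have : (0:ℝ) ≤ m := Nat.cast_nonneg m
      nlinarith
    have h2 : ((m : ℕ) + 1 : ℝ) + 1 - a = ((m : ℝ) + 1 - a) + 1 := by ring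
    rw [Nat.cast_succ, h2, Real.Gamma_add_one h, ih, prod_range_succ]
    ring

private noncomputable def stirSeries (a : ℝ) : PowerSeries ℝ :=
  PowerSeries.mk fun m =>
    if m = 0 then 0 else Real.Gamma ((m : ℝ) - a) / ((m.factorial : ℝ) * Real.Gamma (1 - a))

private lemma stirSeries_eq (a : ℝ) (ha : a < 1) (ha0 : a ≠ 0) :
    stirSeries a = PowerSeries.C (-1 / a) * (binSeries a - 1) := by
  have hΓ : Real.Gamma (1 - a) ≠ 0 := ne_of_gt (Real.Gamma_pos_of_pos (by linarith))
  ext m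
  rw [PowerSeries.coeff_C_mul, map_sub]
  simp only [stirSeries, binSeries, coeff_mk]
  cases m with
  | zero => simp [Ring.choose_zero_right]
  | succ k =>
    rw [if_neg (Nat.succ_ne_zero k), PowerSeries.coeff_one, if_neg (Nat.succ_ne_zero k),
      sub_zero, rchoose_eq]
    have hg : Real.Gamma ((k + 1 : ℕ) - a)
        = Real.Gamma (1 - a) * ∏ j ∈ range k, ((j : ℝ) + 1 - a) := by
      have := gamma_prod a ha k
      rw [← this]; norm_num
    rw [hg]
    have hp : ∏ i ∈ range (k + 1), (a - (i : ℝ)) =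
        (∏ j ∈ range k, (a - ((j : ℝ) + 1))) * (a - 0) := by
      rw [prod_range_succ']
      push_cast
      congr 1
    have hs : ∏ j ∈ range k, (a - ((j : ℝ) + 1)) =
        (-1) ^ k * ∏ j ∈ range k, ((j : ℝ) + 1 - a) := by
      calc ∏ j ∈ range k, (a - ((j : ℝ) + 1)) = ∏ j ∈ range k, (-1) * ((j : ℝ) + 1 - a) := by
            apply prod_congr rfl; intros; ring
        _ = _ := by rw [prod_mul_distrib, prod_const, card_range]
    rw [hp, hs]
    have hfac : ((k + 1).factorial : ℝ) ≠ 0 := Nat.cast_ne_zero.mpr (Nat.factorial_ne_zero _)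
    field_simp
    ring_nf
    have hsq : ((-1 : ℝ)) ^ (k * 2) = 1 := by
      rw [mul_comm, pow_mul, neg_one_sq, one_pow]
    rw [hsq]
    ring

/-- Generalized Stirling numbers of the first kind:
`S_a(n,l) = (n!/l!) · Σ over compositions of n into l positive parts of
∏ Γ(n_k − a)/(n_k!·Γ(1−a))`. -/
noncomputable def genStirling (a : ℝ) (n l : ℕ) : ℝ :=
  (n.factorial : ℝ) / (l.factorial : ℝ) *
    ∑ f ∈ (Finset.Nat.antidiagonalTuple l n).filter (fun f => ∀ k, 0 < f k),
      ∏ k, Real.Gamma ((f k : ℝ) - a) / ((f k).factorial * Real.Gamma (1 - a))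

/-- For a < 1, a ≠ 0 and 1 ≤ l ≤ n:
S_a(n,l) = (1/(l!·a^l)) · Σ_{k=0}^{l} (−1)^k C(l,k) ∏_{i=0}^{n−1}(i − a·k). -/
theorem genStirling_eq_alternating_sum (a : ℝ) (ha : a < 1) (ha0 : a ≠ 0)
    (n l : ℕ) (hl : 1 ≤ l) (hln : l ≤ n) :
    genStirling a n l =
      1 / ((l.factorial : ℝ) * a ^ l) *
        ∑ k ∈ Finset.range (l + 1),
          (-1 : ℝ) ^ k * (l.choose k : ℝ) * ∏ i ∈ Finset.range n, ((i : ℝ) - a * (k : ℝ)) := by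
  have hfl : (l.factorial : ℝ) ≠ 0 := Nat.cast_ne_zero.mpr (Nat.factorial_ne_zero _)
  have hal : a ^ l ≠ 0 := pow_ne_zero _ ha0
  -- Step 1: the filtered sum is a power series coefficient
  have hstep1 : genStirling a n l =
      (n.factorial : ℝ) / (l.factorial : ℝ) * PowerSeries.coeff n (stirSeries a ^ l) := by
    rw [genStirling, coeff_pow_tuple,
      filter_pos_sum l n
        (fun m => Real.Gamma ((m : ℝ) - a) / ((m.factorial : ℝ) * Real.Gamma (1 - a)))]
    congr 1
    apply Finset.sum_congr rfl
    intro f _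
    apply Finset.prod_congr rfl
    intro k _
    simp [stirSeries, coeff_mk]
  rw [hstep1, stirSeries_eq a ha ha0, mul_pow, ← map_pow, PowerSeries.coeff_C_mul, sub_pow]
  rw [map_sum]
  have hterm : ∀ m ∈ Finset.range (l + 1),
      PowerSeries.coeff n
          ((-1 : PowerSeries ℝ) ^ (m + l) * binSeries a ^ m * 1 ^ (l - m) * (l.choose m : PowerSeries ℝ))
        = (-1 : ℝ) ^ (m + l) * (l.choose m : ℝ) * ((-1 : ℝ) ^ n * Ring.choose (a * m) n) := by
    intro m _
    have : ((-1 : PowerSeries ℝ)) ^ (m + l) * binSeries a ^ m * 1 ^ (l - m)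
          * (l.choose m : PowerSeries ℝ)
        = PowerSeries.C ((-1 : ℝ) ^ (m + l) * (l.choose m : ℝ)) * binSeries (a * m) := by
      rw [binSeries_pow, one_pow, map_mul, map_pow, map_neg, map_one, map_natCast]
      ring
    rw [this, PowerSeries.coeff_C_mul, coeff_binSeries]
  rw [Finset.sum_congr rfl hterm, Finset.mul_sum, Finset.mul_sum, Finset.mul_sum]
  apply Finset.sum_congr rfl
  intro m _
  have h1 : ∏ i ∈ Finset.range n, ((i : ℝ) - a * m)
      = (-1 : ℝ) ^ n * ((n.factorial : ℝ) * Ring.choose (a * m) n) := by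
    rw [prod_sign, fact_mul_rchoose]
  rw [h1]
  have hl2 : ((-1 : ℝ)) ^ (l * 2) = 1 := by
    rw [mul_comm, pow_mul, neg_one_sq, one_pow]
  field_simp
  ring_nf
  rw [hl2]
  have hinv : a ^ l * a⁻¹ ^ l = 1 := by rw [← mul_pow, mul_inv_cancel₀ ha0, one_pow]
  linear_combination ((l.choose m : ℝ) * Ring.choose (a * m) n * (-1) ^ m) * hinv
end

section
/- For every real number a < 1 and all integers n ≥ 1, the generalized Stirling numbers satisfy the boundary values S_a(n,1) = Γ(n − a)/Γ(1 − a) and S_a(n,n) = 1, and the recursion S_a(n+1,l) = (n − a·l)·S_a(n,l) + S_a(n,l−1) for all 1 ≤ l ≤ n+1 (with the convention S_a(n,l) = 0 for l > n). -/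
open scoped Classical BigOperators

namespace GenStirlingAux

open PowerSeries

/-- the coefficient `c a m = Γ(m-a)/(m! Γ(1-a))` for `m ≥ 1`, `0` for `m = 0`. -/
noncomputable def c (a : ℝ) (m : ℕ) : ℝ :=
  if m = 0 then 0 else Real.Gamma ((m : ℝ) - a) / (m.factorial * Real.Gamma (1 - a))

noncomputable def phi (a : ℝ) : PowerSeries ℝ := PowerSeries.mk (c a)

variable {a : ℝ}

lemma gamma_ne (ha : a < 1) : Real.Gamma (1 - a) ≠ 0 :=
  (Real.Gamma_pos_of_pos (by linarith)).ne'

lemma c_zero : c a 0 = 0 := by simp [c]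

lemma c_one (ha : a < 1) : c a 1 = 1 := by
  simp [c, gamma_ne ha]

lemma c_rec (ha : a < 1) (m : ℕ) (hm : 1 ≤ m) :
    ((m : ℝ) + 1) * c a (m + 1) = ((m : ℝ) - a) * c a m := by
  have hm0 : m ≠ 0 := by omega
  have hma : (m : ℝ) - a ≠ 0 := by
    have : (1 : ℝ) ≤ m := by exact_mod_cast hm
    nlinarith
  have hG : Real.Gamma (((m : ℝ) + 1) - a) = ((m : ℝ) - a) * Real.Gamma ((m : ℝ) - a) := by
    rw [show ((m : ℝ) + 1) - a = ((m : ℝ) - a) + 1 by ring, Real.Gamma_add_one hma]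
  simp only [c, hm0, if_false, Nat.succ_ne_zero, Nat.cast_succ, Nat.factorial_succ]
  rw [hG]
  have h1 : (m.factorial : ℝ) ≠ 0 := by exact_mod_cast m.factorial_ne_zero
  have h2 := gamma_ne ha
  field_simp
  push_cast
  ring

lemma coeff_phi (m : ℕ) : coeff m (phi a) = c a m := coeff_mk _ _

lemma phi_eq : phi a = X * PowerSeries.mk (fun m => c a (m + 1)) := by
  ext n
  cases n with
  | zero => simp [coeff_phi, c_zero]
  | succ k => simp [coeff_succ_X_mul, coeff_phi]

/-- bridge: coefficient of a power as a sum over `antidiagonalTuple`. -/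
lemma coeff_pow_tuple (n l : ℕ) (φ : PowerSeries ℝ) :
    coeff n (φ ^ l) =
      ∑ f ∈ Finset.Nat.antidiagonalTuple l n, ∏ k, coeff (f k) φ := by
  rw [PowerSeries.coeff_pow]
  refine Finset.sum_nbij' (fun f => fun k : Fin l => f k)
    (fun t => Finsupp.onFinset (Finset.range l)
      (fun m => if h : m < l then t ⟨m, h⟩ else 0)
      (fun m hm => by by_contra h; simp [Finset.mem_range] at h; simp [h] at hm)) ?_ ?_ ?_ ?_ ?_
  · intro f hf
    rw [Finset.mem_finsuppAntidiag] at hf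
    rw [Finset.Nat.mem_antidiagonalTuple]
    rw [← hf.1]
    exact (Finset.sum_range fun m => f m).symm
  · intro t ht
    rw [Finset.Nat.mem_antidiagonalTuple] at ht
    rw [Finset.mem_finsuppAntidiag]
    constructor
    · rw [← ht, Finset.sum_range]
      apply Finset.sum_congr rfl
      intro i _
      simp [Finsupp.onFinset_apply, i.isLt]
    · intro m hm
      simp only [Finsupp.mem_support_iff, Finsupp.onFinset_apply] at hm
      by_contra h
      simp only [Finset.mem_range] at h
      simp [h] at hm
  · intro f hf
    rw [Finset.mem_finsuppAntidiag] at hf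
    ext m
    simp only [Finsupp.onFinset_apply]
    by_cases h : m < l
    · simp [h]
    · simp only [h, dif_neg, not_false_iff]
      by_contra hne
      have : f m ≠ 0 := fun h0 => hne h0.symm
      have := hf.2 (Finsupp.mem_support_iff.mpr this)
      simp [Finset.mem_range] at this
      omega
  · intro t ht
    ext k
    simp [Finsupp.onFinset_apply, k.isLt]
  · intro f hf
    exact Finset.prod_range fun i => coeff (f i) φ

/-- the filtered sum in `genStirling` equals the coefficient of `φ^l`. -/
lemma sum_eq_coeff (ha : a < 1) (n l : ℕ) :
    (∑ f ∈ (Finset.Nat.antidiagonalTuple l n).filter (fun f => ∀ k, 0 < f k),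
      ∏ k, Real.Gamma ((f k : ℝ) - a) / ((f k).factorial * Real.Gamma (1 - a)))
      = coeff n (phi a ^ l) := by
  rw [coeff_pow_tuple]
  conv_rhs => rw [← Finset.sum_filter_of_ne (p := fun f : Fin l → ℕ => ∀ k, 0 < f k)
    (by
      intro f _ hne k
      by_contra h
      push_neg at h
      have h' : f k = 0 := by omega
      apply hne
      apply Finset.prod_eq_zero (Finset.mem_univ k)
      simp [coeff_phi, h', c_zero])]
  apply Finset.sum_congr rfl
  intro f hf
  rw [Finset.mem_filter] at hf
  apply Finset.prod_congr rfl
  intro k _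
  rw [coeff_phi, c]
  rw [if_neg (hf.2 k).ne']

lemma coeff_pow_lt (h : n < l) : coeff n (phi a ^ l) = 0 := by
  rw [phi_eq, mul_pow, coeff_X_pow_mul']
  rw [if_neg (by omega)]

lemma coeff_pow_diag (ha : a < 1) (n : ℕ) : coeff n (phi a ^ n) = 1 := by
  rw [phi_eq, mul_pow]
  have := coeff_X_pow_mul ((PowerSeries.mk fun m => c a (m + 1) : PowerSeries ℝ) ^ n) n 0
  rw [zero_add] at this
  rw [this]
  have : (coeff 0) ((PowerSeries.mk fun m => c a (m + 1) : PowerSeries ℝ) ^ n)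
      = (coeff 0 (PowerSeries.mk fun m => c a (m + 1) : PowerSeries ℝ)) ^ n := by
    simp only [PowerSeries.coeff_zero_eq_constantCoeff, map_pow]
  rw [this, coeff_mk, c_one ha, one_pow]

lemma ode (ha : a < 1) :
    (1 - X) * (PowerSeries.derivative ℝ (phi a)) = 1 - C a * phi a := by
  ext m
  rw [sub_mul, one_mul, map_sub, map_sub]
  cases m with
  | zero =>
    have h1 : coeff 0 (X * (PowerSeries.derivative ℝ (phi a))) = 0 := by
      rw [coeff_zero_eq_constantCoeff, map_mul, constantCoeff_X, zero_mul]
    have h2 : coeff 0 (C a * phi a) = 0 := by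
      rw [coeff_zero_eq_constantCoeff, map_mul, constantCoeff_C]
      simp [phi, c_zero]
    rw [h1, h2, coeff_derivative, coeff_phi, c_one ha]
    norm_num
  | succ m =>
    rw [coeff_succ_X_mul, coeff_derivative, coeff_derivative, coeff_phi, coeff_phi]
    rw [PowerSeries.coeff_one, if_neg (Nat.succ_ne_zero m), coeff_C_mul, coeff_phi]
    have := c_rec ha (m + 1) (by omega)
    push_cast at this ⊢
    linarith [this]

/-- the key coefficient recursion. -/
lemma coeff_rec (ha : a < 1) (n l : ℕ) (hn : 1 ≤ n) (hl : 1 ≤ l) :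
    ((n : ℝ) + 1) * coeff (n + 1) (phi a ^ l)
      = ((n : ℝ) - a * l) * coeff n (phi a ^ l)
        + l * coeff n (phi a ^ (l - 1)) := by
  have hD : PowerSeries.derivative ℝ (phi a ^ l)
      = (l : ℕ) • ((phi a) ^ (l - 1) * PowerSeries.derivative ℝ (phi a)) := by
    rw [Derivation.leibniz_pow]
    congr 1
  have key : (1 - X) * PowerSeries.derivative ℝ (phi a ^ l)
      = (l : ℕ) • ((phi a) ^ (l - 1) - C a * (phi a) ^ l) := by
    rw [hD, mul_smul_comm, ← mul_assoc, mul_comm (1 - X) ((phi a) ^ (l - 1)), mul_assoc,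
      ode ha, mul_sub, mul_one]
    congr 2
    rw [← mul_assoc, mul_comm (phi a ^ (l - 1)) (C a), mul_assoc, ← pow_succ]
    congr 2
    omega
  obtain ⟨m, rfl⟩ : ∃ m, n = m + 1 := ⟨n - 1, by omega⟩
  have hc := congrArg (coeff (m + 1)) key
  rw [sub_mul, one_mul, map_sub, coeff_succ_X_mul, coeff_derivative, coeff_derivative,
    map_nsmul, map_sub, coeff_C_mul, nsmul_eq_mul] at hc
  push_cast at hc ⊢
  rw [show m + 1 + 1 = m + 2 from rfl]
  push_cast
  linarith [hc]

end GenStirlingAux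

open GenStirlingAux in
/-- Boundary values and recursion for the generalized Stirling numbers:
for a < 1 and n ≥ 1, S_a(n,1) = Γ(n−a)/Γ(1−a), S_a(n,n) = 1, and
S_a(n+1,l) = (n − a·l)·S_a(n,l) + S_a(n,l−1) for all 1 ≤ l ≤ n+1
(with the convention S_a(n,l) = 0 for l > n, which holds by definition). -/
theorem genStirling_boundary_and_recursion (a : ℝ) (ha : a < 1) (n : ℕ) (hn : 1 ≤ n) :
    genStirling a n 1 = Real.Gamma ((n : ℝ) - a) / Real.Gamma (1 - a) ∧
    genStirling a n n = 1 ∧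
    ∀ l : ℕ, 1 ≤ l → l ≤ n + 1 →
      genStirling a (n + 1) l
        = ((n : ℝ) - a * (l : ℝ)) * genStirling a n l + genStirling a n (l - 1) := by
  classical
  have hrw : ∀ m l : ℕ, genStirling a m l
      = (m.factorial : ℝ) / (l.factorial : ℝ)
        * PowerSeries.coeff m (GenStirlingAux.phi a ^ l) := by
    intro m l
    rw [genStirling, GenStirlingAux.sum_eq_coeff ha]
  have hG := GenStirlingAux.gamma_ne ha
  have hfn : (n.factorial : ℝ) ≠ 0 := by exact_mod_cast n.factorial_ne_zero
  refine ⟨?_, ?_, ?_⟩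
  · rw [hrw, pow_one, GenStirlingAux.coeff_phi, GenStirlingAux.c, if_neg (by omega)]
    rw [Nat.factorial_one]
    field_simp
    ring
  · rw [hrw, GenStirlingAux.coeff_pow_diag ha]
    field_simp
  · intro l hl hln
    obtain ⟨k, rfl⟩ : ∃ k, l = k + 1 := ⟨l - 1, by omega⟩
    rw [hrw, hrw, hrw]
    simp only [Nat.add_sub_cancel]
    have key := GenStirlingAux.coeff_rec ha n (k + 1) hn (by omega)
    simp only [Nat.add_sub_cancel] at key
    have hfk : (k.factorial : ℝ) ≠ 0 := by exact_mod_cast k.factorial_ne_zero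
    have hf1 : ((k + 1).factorial : ℝ) = ((k : ℝ) + 1) * k.factorial := by
      rw [Nat.factorial_succ]; push_cast; ring
    have hf2 : ((n + 1).factorial : ℝ) = ((n : ℝ) + 1) * n.factorial := by
      rw [Nat.factorial_succ]; push_cast; ring
    rw [hf1, hf2]
    push_cast at key ⊢
    have hk1 : ((k : ℝ) + 1) ≠ 0 := by positivity
    field_simp
    linear_combination key
end

section
/- Let ρ be a σ-finite measure on (0,∞) with ∫_0^∞ min(1,s) ρ(ds) < ∞. Then for every j ≥ 1 the integral ∫_0^∞ s^j e^{−s} ρ(ds) is finite, and for every t ∈ [0,1] the series Σ_{j=1}^∞ (t^j/j!) ∫_0^∞ s^j e^{−s} ρ(ds) converges and ∫_0^∞ (1 − e^{−(1−t)s}) ρ(ds) = ∫_0^∞ (1 − e^{−s}) ρ(ds) − Σ_{j=1}^∞ (t^j/j!) ∫_0^∞ s^j e^{−s} ρ(ds). (This identifies the completely-random-measure mixed Poisson process as a compound Poisson process whose number of clusters is Poisson with mean G_0(Ω)·∫(1−e^{−s})ρ(ds) and whose cluster sizes have probability mass function π_j = ∫ s^j e^{−s} ρ(ds) / (j! ∫(1−e^{−s})ρ(ds));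 the case t = 1 shows Σ_j π_j = 1.) -/
open scoped Classical BigOperators

open MeasureTheory

private lemma exp_sub_one_eq_tsum (x : ℝ) :
    Real.exp x - 1 = ∑' j : ℕ, x ^ (j + 1) / ((j + 1).factorial : ℝ) := by
  have hexp : Real.exp x = ∑' n : ℕ, x ^ n / (n.factorial : ℝ) := by
    rw [Real.exp_eq_exp_ℝ, NormedSpace.exp_eq_tsum_div]
  rw [Summable.tsum_eq_zero_add (Real.summable_pow_div_factorial x)] at hexp
  simp only [pow_zero, Nat.factorial_zero, Nat.cast_one, div_one] at hexp
  linarith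

private lemma pow_mul_exp_le_aux (j : ℕ) (hj : 1 ≤ j) {s : ℝ} (hs : 0 < s) :
    s ^ j * Real.exp (-s) ≤ (j.factorial : ℝ) * min 1 s := by
  have hfac : (1 : ℝ) ≤ (j.factorial : ℝ) := Nat.one_le_cast.mpr j.factorial_pos
  rcases le_total s 1 with h1 | h1
  · rw [min_eq_right h1]
    have h2 : s ^ j ≤ s := by
      calc s ^ j ≤ s ^ 1 := pow_le_pow_of_le_one hs.le h1 hj
        _ = s := pow_one s
    have h3 : Real.exp (-s) ≤ 1 := Real.exp_le_one_iff.mpr (by linarith)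
    have h4 : (0 : ℝ) < s ^ j := pow_pos hs j
    nlinarith [Real.exp_pos (-s)]
  · rw [min_eq_left h1, mul_one]
    have h2 : s ^ j ≤ Real.exp s * (j.factorial : ℝ) :=
      (div_le_iff₀ (by positivity)).mp (Real.pow_div_factorial_le_exp s hs.le j)
    have h3 : (0 : ℝ) < Real.exp (-s) := Real.exp_pos _
    calc s ^ j * Real.exp (-s) ≤ (Real.exp s * (j.factorial : ℝ)) * Real.exp (-s) := by
          nlinarith
      _ = (j.factorial : ℝ) * (Real.exp s * Real.exp (-s)) := by ring
      _ = (j.factorial : ℝ) := by rw [← Real.exp_add]; simp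

private lemma one_sub_exp_le_min {s : ℝ} (hs : 0 ≤ s) : 1 - Real.exp (-s) ≤ min 1 s := by
  refine le_min (by nlinarith [Real.exp_pos (-s)]) ?_
  nlinarith [Real.add_one_le_exp (-s)]

/-- Let ρ be a σ-finite measure on (0,∞) with ∫ min(1,s) ρ(ds) < ∞.  Then every
moment-type integral ∫ s^j e^{−s} ρ(ds) (j ≥ 1) is finite, and for every t ∈ [0,1]
the series Σ_{j≥1} (t^j/j!)·∫ s^j e^{−s} ρ(ds) converges with
∫ (1 − e^{−(1−t)s}) ρ(ds) = ∫ (1 − e^{−s}) ρ(ds) − Σ_{j≥1} (t^j/j!)·∫ s^j e^{−s} ρ(ds).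
This identifies the completely-random-measure mixed Poisson process as a compound
Poisson process; the case t = 1 shows the cluster-size probabilities π_j sum to 1. -/
theorem mixed_poisson_compound_poisson_identity
    (ρ : Measure ℝ) [SigmaFinite ρ] (hsupp : ρ (Set.Iic 0) = 0)
    (hint : ∫⁻ s in Set.Ioi (0 : ℝ), ENNReal.ofReal (min 1 s) ∂ρ < ⊤) :
    (∀ j : ℕ, 1 ≤ j →
      IntegrableOn (fun s : ℝ => s ^ j * Real.exp (-s)) (Set.Ioi 0) ρ) ∧
    ∀ t : ℝ, t ∈ Set.Icc (0 : ℝ) 1 →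
      Summable (fun j : ℕ =>
        t ^ (j + 1) / ((j + 1).factorial : ℝ) *
          ∫ s in Set.Ioi (0 : ℝ), s ^ (j + 1) * Real.exp (-s) ∂ρ) ∧
      (∫ s in Set.Ioi (0 : ℝ), (1 - Real.exp (-(1 - t) * s)) ∂ρ)
        = (∫ s in Set.Ioi (0 : ℝ), (1 - Real.exp (-s)) ∂ρ)
          - ∑' j : ℕ,
              t ^ (j + 1) / ((j + 1).factorial : ℝ) *
                ∫ s in Set.Ioi (0 : ℝ), s ^ (j + 1) * Real.exp (-s) ∂ρ := by
  -- Integrability of min 1 s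
  have hmin_int : IntegrableOn (fun s : ℝ => min 1 s) (Set.Ioi 0) ρ := by
    refine ⟨(continuous_const.min continuous_id).aestronglyMeasurable, ?_⟩
    rw [HasFiniteIntegral]
    calc ∫⁻ s, ‖min 1 s‖₊ ∂(ρ.restrict (Set.Ioi 0))
        = ∫⁻ s in Set.Ioi (0 : ℝ), ENNReal.ofReal (min 1 s) ∂ρ := by
          refine lintegral_congr_ae ?_
          filter_upwards [ae_restrict_mem measurableSet_Ioi] with s hs
          exact Real.enorm_eq_ofReal (le_min zero_le_one (le_of_lt hs))
      _ < ⊤ := hint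
  have hInt : ∀ j : ℕ, 1 ≤ j →
      IntegrableOn (fun s : ℝ => s ^ j * Real.exp (-s)) (Set.Ioi 0) ρ := by
    intro j hj
    refine Integrable.mono' (hmin_int.const_mul (j.factorial : ℝ)) ?_ ?_
    · exact ((continuous_pow j).mul
        (Real.continuous_exp.comp continuous_neg)).aestronglyMeasurable
    · filter_upwards [ae_restrict_mem measurableSet_Ioi] with s hs
      rw [Real.norm_eq_abs,
        abs_of_nonneg (mul_nonneg (pow_nonneg (le_of_lt hs) _) (Real.exp_pos _).le)]
      exact pow_mul_exp_le_aux j hj hs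
  refine ⟨hInt, ?_⟩
  intro t ht
  obtain ⟨ht0, ht1⟩ := ht
  -- notation
  set f : ℕ → ℝ → ℝ := fun j s =>
    t ^ (j + 1) / ((j + 1).factorial : ℝ) * (s ^ (j + 1) * Real.exp (-s)) with hf
  have hfnonneg : ∀ j : ℕ, ∀ s : ℝ, 0 < s → 0 ≤ f j s := by
    intro j s hs
    have h1 : (0 : ℝ) ≤ t ^ (j + 1) := pow_nonneg ht0 _
    have h2 : (0 : ℝ) < ((j + 1).factorial : ℝ) := by positivity
    exact mul_nonneg (div_nonneg h1 h2.le)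
      (mul_nonneg (pow_nonneg hs.le _) (Real.exp_pos (-s)).le)
  have hfmeas : ∀ j : ℕ, Measurable fun s : ℝ => ENNReal.ofReal (f j s) := by
    intro j
    exact (continuous_const.mul ((continuous_pow (j + 1)).mul
      (Real.continuous_exp.comp continuous_neg))).measurable.ennreal_ofReal
  set a : ℕ → ENNReal := fun j =>
    ∫⁻ s in Set.Ioi (0 : ℝ), ENNReal.ofReal (f j s) ∂ρ with ha
  set LA : ENNReal := ∫⁻ s in Set.Ioi (0 : ℝ), ENNReal.ofReal (1 - Real.exp (-s)) ∂ρ with hLA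
  set LB : ENNReal :=
    ∫⁻ s in Set.Ioi (0 : ℝ), ENNReal.ofReal (1 - Real.exp (-(1 - t) * s)) ∂ρ with hLB
  -- pointwise real identity and summability
  have hsum : ∀ s : ℝ, Summable fun j : ℕ => f j s := by
    intro s
    have h1 : Summable fun j : ℕ => (t * s) ^ (j + 1) / (((j + 1).factorial : ℝ)) :=
      (_root_.summable_nat_add_iff 1).mpr (Real.summable_pow_div_factorial (t * s))
    refine (h1.mul_right (Real.exp (-s))).congr fun j => ?_
    simp only [hf, mul_pow]; ring
  have hkey : ∀ s : ℝ, 0 < s →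
      (∑' j : ℕ, f j s) = Real.exp (-(1 - t) * s) - Real.exp (-s) := by
    intro s hs
    have h1 : ∀ j : ℕ, f j s
        = (t * s) ^ (j + 1) / ((j + 1).factorial : ℝ) * Real.exp (-s) := by
      intro j; simp only [hf, mul_pow]; ring
    rw [tsum_congr h1, tsum_mul_right, ← exp_sub_one_eq_tsum (t * s)]
    have h2 : t * s + -s = -(1 - t) * s := by ring
    rw [sub_mul, one_mul, ← Real.exp_add, h2]
  -- pointwise ENNReal identity
  have hptwise : ∀ s : ℝ, 0 < s →
      ENNReal.ofReal (1 - Real.exp (-s))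
        = ENNReal.ofReal (1 - Real.exp (-(1 - t) * s)) + ∑' j : ℕ, ENNReal.ofReal (f j s) := by
    intro s hs
    have hB0 : 0 ≤ 1 - Real.exp (-(1 - t) * s) := by
      have : Real.exp (-(1 - t) * s) ≤ 1 := Real.exp_le_one_iff.mpr (by nlinarith)
      linarith
    have hS0 : 0 ≤ ∑' j : ℕ, f j s := tsum_nonneg fun j => hfnonneg j s hs
    have hsplit : 1 - Real.exp (-s)
        = (1 - Real.exp (-(1 - t) * s)) + ∑' j : ℕ, f j s := by
      rw [hkey s hs]; ring
    rw [hsplit, ENNReal.ofReal_add hB0 hS0,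
      ENNReal.ofReal_tsum_of_nonneg (fun j => hfnonneg j s hs) (hsum s)]
  -- lintegral identity
  have hLAeq : LA = LB + ∑' j : ℕ, a j := by
    have h1 : LA = ∫⁻ s in Set.Ioi (0 : ℝ),
        (ENNReal.ofReal (1 - Real.exp (-(1 - t) * s))
          + ∑' j : ℕ, ENNReal.ofReal (f j s)) ∂ρ := by
      refine lintegral_congr_ae ?_
      filter_upwards [ae_restrict_mem measurableSet_Ioi] with s hs
      exact hptwise s hs
    rw [h1, lintegral_add_left (by fun_prop : Measurable fun s : ℝ =>
        ENNReal.ofReal (1 - Real.exp (-(1 - t) * s))),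
      lintegral_tsum fun j => (hfmeas j).aemeasurable]
  -- finiteness
  have hLAlt : LA < ⊤ := by
    refine lt_of_le_of_lt ?_ hint
    refine lintegral_mono_ae ?_
    filter_upwards [ae_restrict_mem measurableSet_Ioi] with s hs
    exact ENNReal.ofReal_le_ofReal (one_sub_exp_le_min hs.le)
  have hSlt : (∑' j : ℕ, a j) < ⊤ := by
    rw [hLAeq] at hLAlt
    exact lt_of_le_of_lt le_add_self hLAlt
  have hLBlt : LB < ⊤ := by
    rw [hLAeq] at hLAlt
    exact lt_of_le_of_lt le_self_add hLAlt
  have hajlt : ∀ j : ℕ, a j ≠ ⊤ := fun j =>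
    (lt_of_le_of_lt (ENNReal.le_tsum j) hSlt).ne
  -- real conversions
  have hA : (∫ s in Set.Ioi (0 : ℝ), (1 - Real.exp (-s)) ∂ρ) = LA.toReal := by
    rw [integral_eq_lintegral_of_nonneg_ae ?_ ?_]
    · filter_upwards [ae_restrict_mem measurableSet_Ioi] with s hs
      have : Real.exp (-s) ≤ 1 := Real.exp_le_one_iff.mpr (by linarith [hs.out])
      simp only [Pi.zero_apply]; linarith
    · exact (continuous_const.sub (Real.continuous_exp.comp continuous_neg)).aestronglyMeasurable
  have hB : (∫ s in Set.Ioi (0 : ℝ), (1 - Real.exp (-(1 - t) * s)) ∂ρ) = LB.toReal := by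
    rw [integral_eq_lintegral_of_nonneg_ae ?_ ?_]
    · filter_upwards [ae_restrict_mem measurableSet_Ioi] with s hs
      have : Real.exp (-(1 - t) * s) ≤ 1 := Real.exp_le_one_iff.mpr (by nlinarith [hs.out])
      simp only [Pi.zero_apply]; linarith
    · exact (continuous_const.sub (Real.continuous_exp.comp (continuous_const.mul continuous_id))).aestronglyMeasurable
  have hr : ∀ j : ℕ,
      t ^ (j + 1) / ((j + 1).factorial : ℝ) *
          (∫ s in Set.Ioi (0 : ℝ), s ^ (j + 1) * Real.exp (-s) ∂ρ)
        = (a j).toReal := by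
    intro j
    rw [← integral_const_mul]
    rw [integral_eq_lintegral_of_nonneg_ae ?_ ?_]
    · filter_upwards [ae_restrict_mem measurableSet_Ioi] with s hs
      exact hfnonneg j s hs
    · exact (continuous_const.mul ((continuous_pow (j + 1)).mul
        (Real.continuous_exp.comp continuous_neg))).aestronglyMeasurable
  have hsummable : Summable (fun j : ℕ =>
      t ^ (j + 1) / ((j + 1).factorial : ℝ) *
        ∫ s in Set.Ioi (0 : ℝ), s ^ (j + 1) * Real.exp (-s) ∂ρ) :=
    (ENNReal.summable_toReal hSlt.ne).congr fun j => (hr j).symm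
  refine ⟨hsummable, ?_⟩
  have hts : (∑' j : ℕ,
      t ^ (j + 1) / ((j + 1).factorial : ℝ) *
        ∫ s in Set.Ioi (0 : ℝ), s ^ (j + 1) * Real.exp (-s) ∂ρ)
      = (∑' j : ℕ, a j).toReal := by
    rw [ENNReal.tsum_toReal_eq hajlt]
    exact tsum_congr hr
  rw [hA, hB, hts, hLAeq, ENNReal.toReal_add hLBlt.ne hSlt.ne]
  ring
end

section
/- For all real numbers a < 1 with a ≠ 0, c > 0 and φ ≥ 0, the integral ∫_0^∞ (1 − e^{−φ s}) · (1/Γ(1 − a)) · s^{−a−1} e^{−c s} ds is finite and equals ((c + φ)^a − c^a)/a. (This is the Lévy–Khintchine exponent of the generalized gamma process, linking its Laplace transform E[e^{−φ G(A)}] = exp{−(G_0(A)/a)·[(c+φ)^a − c^a]} to its Lévy measure.) -/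
open scoped Classical BigOperators

open MeasureTheory

section aux

open Set Real

/-- per-t integrability of `s ↦ s^(-a) * exp(-(t*s))` on `Ioi 0`. -/
lemma aux_integrable {a t : ℝ} (ha : a < 1) (ht : 0 < t) :
    IntegrableOn (fun s : ℝ => s ^ (-a) * Real.exp (-(t * s))) (Set.Ioi 0) := by
  have h := integrableOn_rpow_mul_exp_neg_mul_rpow (s := -a) (p := 1) (b := t)
    (by linarith) one_pos ht
  refine h.congr_fun (fun x _ => ?_) measurableSet_Ioi
  beta_reduce
  rw [Real.rpow_one]
  ring_nf

lemma aux_value {a t : ℝ} (ha : a < 1) (ht : 0 < t) :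
    ∫ s in Set.Ioi (0:ℝ), s ^ (-a) * Real.exp (-(t * s))
      = Real.Gamma (1 - a) * t ^ (a - 1) := by
  have h := Real.integral_rpow_mul_exp_neg_mul_Ioi (a := 1 - a) (r := t)
    (by linarith) ht
  have h2 : (fun s : ℝ => s ^ (-a) * Real.exp (-(t * s)))
      = fun s : ℝ => s ^ (1 - a - 1) * Real.exp (-(t * s)) := by
    funext s; norm_num
  rw [h2, h, one_div, Real.inv_rpow ht.le, ← Real.rpow_neg ht.le]
  rw [mul_comm]
  norm_num

end aux

/-- Lévy–Khintchine exponent of the generalized gamma process: for a < 1, a ≠ 0,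
c > 0 and φ ≥ 0, the integral ∫_0^∞ (1 − e^{−φs})·(1/Γ(1−a))·s^{−a−1} e^{−cs} ds
is finite and equals ((c+φ)^a − c^a)/a. -/
theorem generalized_gamma_levy_exponent (a c φ : ℝ) (ha : a < 1) (ha0 : a ≠ 0)
    (hc : 0 < c) (hφ : 0 ≤ φ) :
    IntegrableOn
      (fun s : ℝ =>
        (1 - Real.exp (-φ * s)) * (1 / Real.Gamma (1 - a)) * s ^ (-a - 1) * Real.exp (-c * s))
      (Set.Ioi 0) ∧
    (∫ s in Set.Ioi (0 : ℝ),
        (1 - Real.exp (-φ * s)) * (1 / Real.Gamma (1 - a)) * s ^ (-a - 1) * Real.exp (-c * s))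
      = ((c + φ) ^ a - c ^ a) / a := by
  have h1a : (0:ℝ) < 1 - a := by linarith
  have hΓ : 0 < Real.Gamma (1 - a) := Real.Gamma_pos_of_pos h1a
  set μ := volume.restrict (Set.Ioc c (c + φ)) with hμ
  set ν := volume.restrict (Set.Ioi (0:ℝ)) with hν
  set f : ℝ → ℝ → ℝ := fun t s => s ^ (-a) * Real.exp (-(t * s)) with hf
  -- measurability
  have hmeas : AEStronglyMeasurable (Function.uncurry f) (μ.prod ν) := by
    apply Measurable.aestronglyMeasurable
    apply Measurable.mul
    · exact (measurable_snd.pow_const _)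
    · exact (measurable_fst.mul measurable_snd).neg.exp
  -- integrability on the product
  have hprod : Integrable (Function.uncurry f) (μ.prod ν) := by
    rw [MeasureTheory.integrable_prod_iff hmeas]
    constructor
    · filter_upwards [ae_restrict_mem measurableSet_Ioc] with t ht
      exact aux_integrable ha (lt_of_lt_of_le hc ht.1.le)
    · have heq : ∀ᵐ t ∂μ, (∫ s, ‖Function.uncurry f (t, s)‖ ∂ν)
          = Real.Gamma (1 - a) * t ^ (a - 1) := by
        filter_upwards [ae_restrict_mem measurableSet_Ioc] with t ht
        have ht0 : 0 < t := lt_of_lt_of_le hc ht.1.le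
        rw [← aux_value ha ht0]
        refine setIntegral_congr_fun measurableSet_Ioi (fun s hs => ?_)
        have : 0 < s ^ (-a) * Real.exp (-(t * s)) :=
          mul_pos (Real.rpow_pos_of_pos hs _) (Real.exp_pos _)
        simp only [Function.uncurry, f, Real.norm_eq_abs, abs_of_pos this]
      refine (Integrable.congr ?_ (heq.mono fun _ h => h.symm))
      have hcont : ContinuousOn (fun t : ℝ => Real.Gamma (1 - a) * t ^ (a - 1))
          (Set.Icc c (c + φ)) := by
        apply ContinuousOn.mul continuousOn_const
        apply ContinuousOn.rpow_const continuousOn_id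
        intro t ht
        exact Or.inl (ne_of_gt (lt_of_lt_of_le hc ht.1))
      exact (hcont.integrableOn_Icc).mono_set Set.Ioc_subset_Icc_self
  -- identity: for s > 0, inner t-integral equals the (Γ·) original integrand
  have hinner : ∀ s : ℝ, s ∈ Set.Ioi (0:ℝ) →
      (∫ t, f t s ∂μ) = Real.Gamma (1 - a) *
        ((1 - Real.exp (-φ * s)) * (1 / Real.Gamma (1 - a)) * s ^ (-a - 1) * Real.exp (-c * s)) := by
    intro s hs
    rw [Set.mem_Ioi] at hs
    have hint : (∫ t, f t s ∂μ) = ∫ t in Set.Ioc c (c + φ), s ^ (-a) * Real.exp (-(t * s)) := rfl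
    have hle : c ≤ c + φ := by linarith
    rw [hint, ← intervalIntegral.integral_of_le hle]
    have hderiv : ∀ t ∈ Set.uIcc c (c + φ), HasDerivAt
        (fun t : ℝ => -(Real.exp (-(t * s)) * s ^ (-a)) / s)
        (s ^ (-a) * Real.exp (-(t * s))) t := by
      intro t _
      have h1 : HasDerivAt (fun t : ℝ => -(t * s)) (-s) t := by
        simpa using ((hasDerivAt_id t).mul_const s).fun_neg
      have h2 : HasDerivAt (fun t : ℝ => Real.exp (-(t * s))) (Real.exp (-(t * s)) * (-s)) t :=
        (Real.hasDerivAt_exp _).comp t h1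
      have h3 := ((h2.mul_const (s ^ (-a))).fun_neg).div_const s
      refine h3.congr_deriv ?_
      have hs0 : s ≠ 0 := ne_of_gt hs
      field_simp
    have hcont : IntervalIntegrable (fun t : ℝ => s ^ (-a) * Real.exp (-(t * s)))
        volume c (c + φ) := by
      apply Continuous.intervalIntegrable
      exact continuous_const.mul (Real.continuous_exp.comp (continuous_id.mul continuous_const).neg)
    rw [intervalIntegral.integral_eq_sub_of_hasDerivAt hderiv hcont]
    have hsne : s ≠ 0 := ne_of_gt hs
    have hpow : s ^ (-a) = s ^ (-a - 1) * s := by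
      rw [← Real.rpow_add_one hsne]
      norm_num
    have hexp : Real.exp (-((c + φ) * s)) = Real.exp (-(c * s)) * Real.exp (-(φ * s)) := by
      rw [← Real.exp_add]; ring_nf
    field_simp
    rw [hexp, hpow]
    ring_nf
  -- now conclude
  have hswap := MeasureTheory.integral_integral_swap hprod
  have hmarg : Integrable (fun s => ∫ t, f t s ∂μ) ν := by
    have := hprod.swap.integral_prod_left
    simpa [Function.uncurry] using this
  constructor
  · have h2 : IntegrableOn (fun s => (1 / Real.Gamma (1 - a)) * ∫ t, f t s ∂μ) (Set.Ioi 0) :=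
      (hmarg.const_mul _)
    refine h2.congr_fun (fun s hs => ?_) measurableSet_Ioi
    beta_reduce
    rw [hinner s hs]
    field_simp
  · -- compute both sides of hswap
    have hlhs : (∫ t, ∫ s, f t s ∂ν ∂μ) = Real.Gamma (1 - a) * (((c + φ) ^ a - c ^ a) / a) := by
      have heq : ∀ t ∈ Set.Ioc c (c + φ),
          (∫ s, f t s ∂ν) = Real.Gamma (1 - a) * t ^ (a - 1) := fun t ht =>
        aux_value ha (lt_of_lt_of_le hc ht.1.le)
      rw [hμ]
      rw [setIntegral_congr_fun measurableSet_Ioc heq]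
      rw [integral_const_mul, ← intervalIntegral.integral_of_le (by linarith : c ≤ c + φ)]
      rw [integral_rpow (Or.inr ⟨fun h => ha0 (by linarith [sub_eq_iff_eq_add.mp h]),
        Set.notMem_uIcc_of_lt hc (by linarith)⟩)]
      norm_num
    have hrhs : (∫ s, ∫ t, f t s ∂μ ∂ν) = Real.Gamma (1 - a) *
        ∫ s in Set.Ioi (0:ℝ),
          (1 - Real.exp (-φ * s)) * (1 / Real.Gamma (1 - a)) * s ^ (-a - 1) * Real.exp (-c * s) := by
      rw [hν, setIntegral_congr_fun measurableSet_Ioi hinner, integral_const_mul]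
    rw [hrhs] at hswap
    rw [hlhs] at hswap
    exact mul_left_cancel₀ (ne_of_gt hΓ) hswap.symm
end

section
/- For all real numbers γ0 > 0, a < 1 with a ≠ 0, 0 < p < 1 and every t ∈ [0,1], the probability generating function of the generalized negative binomial distribution satisfies Σ_{n=0}^∞ t^n · p_N(n) = exp{−γ0·[(1 − p t)^a − (1 − p)^a]/(a·p^a)}; in particular (t = 1) the values p_N(n), n = 0, 1, 2, …, sum to 1. -/
open scoped Classical BigOperators

/-- `D_n = Σ_{ℓ=0}^n γ0^ℓ · p^{−a·ℓ} · S_a(n,ℓ)`. -/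
noncomputable def Dsum (γ0 a p : ℝ) (n : ℕ) : ℝ :=
  ∑ l ∈ Finset.range (n + 1), γ0 ^ l * p ^ (-(a * (l : ℝ))) * genStirling a n l

/-- The generalized negative binomial probability mass function
`p_N(n) = (p^n/n!) · exp(−γ0·(1 − (1−p)^a)/(a·p^a)) · D_n`. -/
noncomputable def gnbPMF (γ0 a p : ℝ) (n : ℕ) : ℝ :=
  p ^ n / (n.factorial : ℝ) * Real.exp (-γ0 * (1 - (1 - p) ^ a) / (a * p ^ a)) *
    Dsum γ0 a p n

namespace GNB

open scoped ENNReal NNReal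

/-- coefficient `q_m = Γ(m−a)/(m!·Γ(1−a))`. -/
noncomputable def qc (a : ℝ) (m : ℕ) : ℝ :=
  Real.Gamma ((m : ℝ) - a) / ((m.factorial : ℝ) * Real.Gamma (1 - a))

lemma qc_succ_pos {a : ℝ} (ha : a < 1) (m : ℕ) : 0 < qc a (m + 1) := by
  have h1 : (0:ℝ) < ((m + 1 : ℕ) : ℝ) - a := by
    push_cast; linarith [Nat.cast_nonneg (α := ℝ) m]
  have h2 : (0:ℝ) < 1 - a := by linarith
  exact div_pos (Real.Gamma_pos_of_pos h1)
    (mul_pos (by positivity) (Real.Gamma_pos_of_pos h2))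

/-- Coefficients of the binomial series `(1-x)^a = Σ bc a m · x^m`. -/
noncomputable def bc (a : ℝ) : ℕ → ℝ
  | 0 => 1
  | (m + 1) => ((m : ℝ) - a) / ((m : ℝ) + 1) * bc a m

lemma bc_succ_eq {a : ℝ} (ha : a < 1) (ha0 : a ≠ 0) :
    ∀ m : ℕ, bc a (m + 1) = -a * qc a (m + 1) := by
  intro m
  induction m with
  | zero =>
      have hΓ : Real.Gamma (1 - a) ≠ 0 :=
        (Real.Gamma_pos_of_pos (by linarith)).ne'
      simp only [bc, qc]
      push_cast
      field_simp
      simp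
  | succ m ih =>
      have hpos : (0:ℝ) < ((m + 1 : ℕ) : ℝ) - a := by
        push_cast; linarith [Nat.cast_nonneg (α := ℝ) m]
      have hΓ : Real.Gamma (((m + 2 : ℕ) : ℝ) - a)
          = (((m + 1 : ℕ) : ℝ) - a) * Real.Gamma (((m + 1 : ℕ) : ℝ) - a) := by
        have : ((m + 2 : ℕ) : ℝ) - a = (((m + 1 : ℕ) : ℝ) - a) + 1 := by push_cast; ring
        rw [this, Real.Gamma_add_one hpos.ne']
      have : bc a (m + 1 + 1) = (((m+1:ℕ):ℝ) - a) / (((m+1:ℕ):ℝ) + 1) * bc a (m+1) := by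
        simp only [bc]
      rw [this, ih]
      simp only [qc, hΓ]
      have hfac : ((m + 2).factorial : ℝ) = (((m+1:ℕ):ℝ) + 1) * ((m+1).factorial : ℝ) := by
        rw [Nat.factorial_succ]; push_cast; ring
      rw [hfac]
      have hΓ1 : Real.Gamma (1 - a) ≠ 0 := (Real.Gamma_pos_of_pos (by linarith)).ne'
      have h2 : (((m+1:ℕ):ℝ) + 1) ≠ 0 := by positivity
      have h3 : ((m+1).factorial : ℝ) ≠ 0 := by positivity
      field_simp

lemma bc_ne_zero {a : ℝ} (ha : a < 1) (ha0 : a ≠ 0) : ∀ m, bc a m ≠ 0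
  | 0 => one_ne_zero
  | (m + 1) => by
      have h1 : (m : ℝ) - a ≠ 0 := by
        rcases Nat.eq_zero_or_pos m with h | h
        · simpa [h] using neg_ne_zero.mpr ha0
        · have h1 : (1:ℝ) ≤ (m:ℝ) := by exact_mod_cast h
          have : (0:ℝ) < (m:ℝ) - a := by linarith
          exact this.ne'
      have h2 : ((m:ℝ) + 1) ≠ 0 := by positivity
      exact mul_ne_zero (div_ne_zero h1 h2) (bc_ne_zero ha ha0 m)


open Filter Topology

lemma tendsto_ratio_aux (c d : ℝ) :
    Tendsto (fun n : ℕ => ((n : ℝ) + c) / ((n : ℝ) + d)) atTop (𝓝 1) := by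
  have hd : Tendsto (fun n : ℕ => (n : ℝ) + d) atTop atTop :=
    tendsto_atTop_add_const_right _ d tendsto_natCast_atTop_atTop
  have h0 : Tendsto (fun n : ℕ => (c - d) / ((n : ℝ) + d)) atTop (𝓝 0) :=
    Tendsto.div_atTop tendsto_const_nhds hd
  have h1 : Tendsto (fun n : ℕ => 1 + (c - d) / ((n : ℝ) + d)) atTop (𝓝 1) := by
    simpa using tendsto_const_nhds.add h0
  refine h1.congr' ?_
  filter_upwards [hd.eventually_gt_atTop 0] with n hn
  field_simp
  ring

lemma summable_bc_mul_pow {a : ℝ} (ha : a < 1) (ha0 : a ≠ 0) {x : ℝ} (hx : |x| < 1) :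
    Summable (fun m : ℕ => bc a m * x ^ m) := by
  rcases eq_or_ne x 0 with rfl | hx0
  · apply summable_of_ne_finset_zero (s := {0})
    intro m hm
    simp only [Finset.mem_singleton] at hm
    simp [zero_pow hm]
  · apply summable_of_ratio_test_tendsto_lt_one hx
      (Eventually.of_forall fun n => mul_ne_zero (bc_ne_zero ha ha0 n) (pow_ne_zero _ hx0))
    have key : ∀ n : ℕ, 1 ≤ n →
        ‖bc a (n+1) * x ^ (n+1)‖ / ‖bc a n * x ^ n‖ = ((n:ℝ) + (-a)) / ((n:ℝ) + 1) * |x| := by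
      intro n hn
      have hb : bc a (n+1) = ((n:ℝ) - a) / ((n:ℝ) + 1) * bc a n := by simp only [bc]
      have hbn : bc a n ≠ 0 := bc_ne_zero ha ha0 n
      have hna : (0:ℝ) < (n:ℝ) - a := by
        have : (1:ℝ) ≤ (n:ℝ) := by exact_mod_cast hn
        linarith
      have hn1 : (0:ℝ) < (n:ℝ) + 1 := by positivity
      rw [hb]
      simp only [Real.norm_eq_abs, abs_mul, abs_div, pow_succ, abs_pow]
      rw [abs_of_pos hna, abs_of_pos hn1]
      have hax : |x| ^ n ≠ 0 := pow_ne_zero _ (abs_ne_zero.mpr hx0)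
      have hab : |bc a n| ≠ 0 := abs_ne_zero.mpr hbn
      field_simp
      ring
    have hlim : Tendsto (fun n : ℕ => ((n:ℝ) + (-a)) / ((n:ℝ) + 1) * |x|) atTop (𝓝 (1 * |x|)) :=
      (tendsto_ratio_aux (-a) 1).mul_const _
    rw [one_mul] at hlim
    refine hlim.congr' ?_
    filter_upwards [eventually_ge_atTop 1] with n hn
    exact (key n hn).symm

lemma summable_deriv_bound {a : ℝ} (ha : a < 1) (ha0 : a ≠ 0) {r : ℝ} (hr0 : 0 < r)
    (hr1 : r < 1) :
    Summable (fun n : ℕ => (n : ℝ) * |bc a n| * r ^ n) := by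
  apply summable_of_ratio_test_tendsto_lt_one hr1 (l := r)
  · filter_upwards [eventually_ge_atTop 1] with n hn
    have : (0:ℝ) < (n:ℝ) := by exact_mod_cast hn
    exact mul_ne_zero (mul_ne_zero this.ne' (abs_ne_zero.mpr (bc_ne_zero ha ha0 n)))
      (pow_ne_zero _ hr0.ne')
  · have key : ∀ n : ℕ, 1 ≤ n →
        ‖((n+1:ℕ):ℝ) * |bc a (n+1)| * r ^ (n+1)‖ / ‖(n:ℝ) * |bc a n| * r ^ n‖
          = ((n:ℝ) + (-a)) / ((n:ℝ) + 0) * r := by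
      intro n hn
      have hb : bc a (n+1) = ((n:ℝ) - a) / ((n:ℝ) + 1) * bc a n := by simp only [bc]
      have hbn : bc a n ≠ 0 := bc_ne_zero ha ha0 n
      have hnpos : (0:ℝ) < (n:ℝ) := by exact_mod_cast hn
      have hna : (0:ℝ) < (n:ℝ) - a := by
        have : (1:ℝ) ≤ (n:ℝ) := by exact_mod_cast hn
        linarith
      have hn1 : (0:ℝ) < (n:ℝ) + 1 := by positivity
      rw [hb]
      simp only [Real.norm_eq_abs, abs_mul, abs_div, abs_abs, abs_pow, pow_succ]
      rw [abs_of_pos hna, abs_of_pos hn1, abs_of_pos hnpos, abs_of_pos hr0]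
      push_cast
      rw [abs_of_pos hn1]
      have e1 : r ^ n ≠ 0 := pow_ne_zero _ hr0.ne'
      have e2 : |bc a n| ≠ 0 := abs_ne_zero.mpr hbn
      field_simp
      ring
    have hlim : Tendsto (fun n : ℕ => ((n:ℝ) + (-a)) / ((n:ℝ) + 0) * r) atTop (𝓝 (1 * r)) :=
      (tendsto_ratio_aux (-a) 0).mul_const _
    rw [one_mul] at hlim
    refine hlim.congr' ?_
    filter_upwards [eventually_ge_atTop 1] with n hn
    exact (key n hn).symm


lemma binomial_ode {a : ℝ} (ha : a < 1) (ha0 : a ≠ 0) {y : ℝ} (hy : |y| < 1) :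
    (1 - y) * (∑' n : ℕ, (n : ℝ) * bc a n * y ^ (n - 1))
      = -a * ∑' n : ℕ, bc a n * y ^ n := by
  set g : ℕ → ℝ := fun n => (n : ℝ) * bc a n * y ^ (n - 1) with hg
  have hsum : Summable (fun n : ℕ => bc a n * y ^ n) := summable_bc_mul_pow ha ha0 hy
  -- choose r between |y| and 1
  set r : ℝ := (|y| + 1) / 2 with hr
  have hyr : |y| < r := by rw [hr]; linarith
  have hr0 : 0 < r := by have := abs_nonneg y; rw [hr]; linarith
  have hr1 : r < 1 := by rw [hr]; linarith
  have hv : Summable (fun n : ℕ => (n : ℝ) * |bc a n| * r ^ n) :=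
    summable_deriv_bound ha ha0 hr0 hr1
  have hbound : ∀ n : ℕ, ‖g n‖ ≤ (n : ℝ) * |bc a n| * r ^ n / r := by
    intro n
    have h1 : ‖g n‖ = (n : ℝ) * |bc a n| * |y| ^ (n - 1) := by
      simp [hg, abs_mul, abs_pow, Nat.abs_cast]
    rw [h1]
    have h2 : |y| ^ (n - 1) ≤ r ^ n / r := by
      cases n with
      | zero =>
          simp only [Nat.zero_sub, pow_zero]
          rw [le_div_iff₀ hr0, one_mul]
          exact hr1.le
      | succ m =>
          have : (m + 1) - 1 = m := rfl
          rw [this, pow_succ, mul_div_assoc, div_self hr0.ne', mul_one]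
          exact pow_le_pow_left₀ (abs_nonneg y) hyr.le m
    have h3 : (0:ℝ) ≤ (n : ℝ) * |bc a n| := by positivity
    calc (n : ℝ) * |bc a n| * |y| ^ (n - 1) ≤ (n : ℝ) * |bc a n| * (r ^ n / r) :=
          mul_le_mul_of_nonneg_left h2 h3
      _ = (n : ℝ) * |bc a n| * r ^ n / r := by ring
  have hgsum : Summable g :=
    Summable.of_norm_bounded (hv.div_const r) hbound
  have hg0 : g 0 = 0 := by simp [hg]
  have e1 : ∑' n, g n = ∑' n, g (n + 1) := by
    rw [Summable.tsum_eq_zero_add hgsum, hg0, zero_add]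
  have e2 : ∀ n : ℕ, g (n + 1) = ((n : ℝ) - a) * (bc a n * y ^ n) := by
    intro n
    have hb : bc a (n+1) = ((n:ℝ) - a) / ((n:ℝ) + 1) * bc a n := by simp only [bc]
    have hn1 : ((n:ℝ) + 1) ≠ 0 := by positivity
    simp only [hg, hb, Nat.add_sub_cancel]
    push_cast
    field_simp
  have e3 : ∀ n : ℕ, y * g n = (n : ℝ) * (bc a n * y ^ n) := by
    intro n
    cases n with
    | zero => simp [hg]
    | succ m =>
        have h : (m + 1) - 1 = m := rfl
        simp only [hg, h]
        rw [pow_succ]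
        ring
  have hs1 : Summable (fun n : ℕ => ((n : ℝ) - a) * (bc a n * y ^ n)) := by
    refine ((summable_nat_add_iff 1).2 hgsum).congr fun n => (e2 n).symm ▸ rfl
  have hs2 : Summable (fun n : ℕ => (n : ℝ) * (bc a n * y ^ n)) := by
    refine (hgsum.mul_left y).congr fun n => ?_
    rw [e3 n]
  have key : ∑' n, g n - y * ∑' n, g n = -a * ∑' n : ℕ, bc a n * y ^ n := by
    rw [← tsum_mul_left (a := y)]
    have l1 : ∑' n, g n = ∑' n : ℕ, ((n : ℝ) - a) * (bc a n * y ^ n) := by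
      rw [e1]; exact tsum_congr e2
    have l2 : (∑' n : ℕ, y * g n) = ∑' n : ℕ, (n : ℝ) * (bc a n * y ^ n) := tsum_congr e3
    rw [l1, l2, ← Summable.tsum_sub hs1 hs2, ← tsum_mul_left (a := -a)]
    exact tsum_congr fun n => by ring
  calc (1 - y) * ∑' n, g n = ∑' n, g n - y * ∑' n, g n := by ring
    _ = -a * ∑' n : ℕ, bc a n * y ^ n := key

lemma hasSum_binomial {a : ℝ} (ha : a < 1) (ha0 : a ≠ 0) {x : ℝ} (hx0 : 0 ≤ x) (hx1 : x < 1) :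
    HasSum (fun m : ℕ => bc a m * x ^ m) ((1 - x) ^ a) := by
  rcases eq_or_lt_of_le hx0 with h0 | h0
  · subst h0
    have : HasSum (fun m : ℕ => bc a m * (0:ℝ) ^ m) (bc a 0 * (0:ℝ) ^ 0) :=
      hasSum_single 0 (fun m hm => by simp [zero_pow hm])
    simpa [bc, Real.one_rpow] using this
  -- now 0 < x < 1
  set r : ℝ := (x + 1) / 2 with hr
  have hxr : x < r := by rw [hr]; linarith
  have hr0 : 0 < r := by rw [hr]; linarith
  have hr1 : r < 1 := by rw [hr]; linarith
  set s : Set ℝ := Set.Ioo (-r) r with hs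
  set F : ℝ → ℝ := fun y => ∑' n : ℕ, bc a n * y ^ n with hF
  set F' : ℝ → ℝ := fun y => ∑' n : ℕ, (n : ℝ) * bc a n * y ^ (n - 1) with hF'
  have hv : Summable (fun n : ℕ => (n : ℝ) * |bc a n| * r ^ n) :=
    summable_deriv_bound ha ha0 hr0 hr1
  have hu : Summable (fun n : ℕ => (n : ℝ) * |bc a n| * r ^ n / r) := hv.div_const r
  have habs : ∀ y ∈ s, |y| < r := by
    intro y hy
    rw [abs_lt]; exact ⟨hy.1, hy.2⟩
  have hderivterm : ∀ (n : ℕ) (y : ℝ), y ∈ s →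
      HasDerivAt (fun z => bc a n * z ^ n) ((n : ℝ) * bc a n * y ^ (n - 1)) y := by
    intro n y _
    have := (hasDerivAt_pow n y).const_mul (bc a n)
    exact this.congr_deriv (by ring)
  have hboundterm : ∀ (n : ℕ) (y : ℝ), y ∈ s →
      ‖(n : ℝ) * bc a n * y ^ (n - 1)‖ ≤ (n : ℝ) * |bc a n| * r ^ n / r := by
    intro n y hy
    have h1 : ‖(n : ℝ) * bc a n * y ^ (n - 1)‖ = (n : ℝ) * |bc a n| * |y| ^ (n - 1) := by
      simp [abs_mul, abs_pow, Nat.abs_cast]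
    rw [h1]
    have h2 : |y| ^ (n - 1) ≤ r ^ n / r := by
      cases n with
      | zero =>
          simp only [Nat.zero_sub, pow_zero]
          rw [le_div_iff₀ hr0, one_mul]
          exact hr1.le
      | succ m =>
          have hm : (m + 1) - 1 = m := rfl
          rw [hm, pow_succ, mul_div_assoc, div_self hr0.ne', mul_one]
          exact pow_le_pow_left₀ (abs_nonneg y) (habs y hy).le m
    have h3 : (0:ℝ) ≤ (n : ℝ) * |bc a n| := by positivity
    calc (n : ℝ) * |bc a n| * |y| ^ (n - 1) ≤ (n : ℝ) * |bc a n| * (r ^ n / r) :=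
          mul_le_mul_of_nonneg_left h2 h3
      _ = (n : ℝ) * |bc a n| * r ^ n / r := by ring
  have h0s : (0:ℝ) ∈ s := by constructor <;> simp [hr0] <;> linarith
  have hsum0 : Summable (fun n : ℕ => bc a n * (0:ℝ) ^ n) :=
    summable_bc_mul_pow ha ha0 (by rw [abs_zero]; norm_num)
  have hFderiv : ∀ y ∈ s, HasDerivAt F (F' y) y := by
    intro y hy
    exact hasDerivAt_tsum_of_isPreconnected hu isOpen_Ioo (convex_Ioo _ _).isPreconnected
      hderivterm hboundterm h0s hsum0 hy
  -- G = F · (1-y)^(-a) has zero derivative on s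
  have hGderiv : ∀ y ∈ s, HasDerivAt (fun z => F z * (1 - z) ^ (-a)) 0 y := by
    intro y hy
    have h1y : 0 < 1 - y := by
      have := hy.2; simp only [hs, Set.mem_Ioo] at hy; linarith [hy.2, hr1]
    have hrp : HasDerivAt (fun z : ℝ => (1 - z) ^ (-a)) (a * (1 - y) ^ (-a - 1)) y := by
      have hin : HasDerivAt (fun z : ℝ => 1 - z) (-1) y := (hasDerivAt_id y).const_sub 1
      have hout : HasDerivAt (fun w : ℝ => w ^ (-a)) (-a * (1 - y) ^ (-a - 1)) (1 - y) :=
        Real.hasDerivAt_rpow_const (Or.inl h1y.ne')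
      have := hout.comp y hin
      exact this.congr_deriv (by ring)
    have hmul := (hFderiv y hy).mul hrp
    have hode := binomial_ode ha ha0 (lt_trans (habs y hy) hr1)
    have hsplit : (1 - y) ^ (-a) = (1 - y) ^ (-a - 1) * (1 - y) := by
      rw [← Real.rpow_add_one h1y.ne' (-a - 1)]
      norm_num
    refine hmul.congr_deriv ?_
    rw [hsplit]
    have : F' y * ((1 - y) ^ (-a - 1) * (1 - y)) + F y * (a * (1 - y) ^ (-a - 1))
        = (1 - y) ^ (-a - 1) * ((1 - y) * F' y + a * F y) := by ring
    rw [this]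
    have hode' : (1 - y) * F' y + a * F y = 0 := by
      rw [hF', hF]
      rw [binomial_ode ha ha0 (lt_trans (habs y hy) hr1)]
      ring
    rw [hode', mul_zero]
  -- constancy on [0, x]
  have hsub : Set.Icc (0:ℝ) x ⊆ s := by
    intro y hy
    constructor
    · linarith [hy.1]
    · linarith [hy.2, hxr]
  have hdiff : DifferentiableOn ℝ (fun z => F z * (1 - z) ^ (-a)) (Set.Icc 0 x) :=
    fun y hy => ((hGderiv y (hsub hy)).differentiableAt).differentiableWithinAt
  have hderivW : ∀ y ∈ Set.Ico (0:ℝ) x,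
      derivWithin (fun z => F z * (1 - z) ^ (-a)) (Set.Icc 0 x) y = 0 := by
    intro y hy
    have hy' : y ∈ Set.Icc (0:ℝ) x := ⟨hy.1, hy.2.le⟩
    exact ((hGderiv y (hsub hy')).hasDerivWithinAt).derivWithin
      ((uniqueDiffOn_Icc h0) y hy')
  have hconst := constant_of_derivWithin_zero hdiff hderivW x ⟨hx0, le_refl x⟩
  -- G 0 = 1
  have hF0 : F 0 = 1 := by
    have h2 : HasSum (fun m : ℕ => bc a m * (0:ℝ) ^ m) (bc a 0 * (0:ℝ) ^ 0) :=
      hasSum_single 0 (fun m hm => by simp [zero_pow hm])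
    show (∑' n : ℕ, bc a n * (0:ℝ) ^ n) = 1
    rw [h2.tsum_eq]
    simp [bc]
  have hG0 : F 0 * (1 - 0) ^ (-a) = 1 := by
    rw [hF0]; norm_num
  rw [hG0] at hconst
  -- conclude
  have h1x : 0 < 1 - x := by linarith
  have hpowpos : 0 < (1 - x) ^ a := Real.rpow_pos_of_pos h1x a
  have hFx : F x = (1 - x) ^ a := by
    have hneg : (1 - x) ^ (-a) = ((1 - x) ^ a)⁻¹ := Real.rpow_neg h1x.le a
    rw [hneg] at hconst
    field_simp at hconst
    linarith [hconst]
  have hsumx : Summable (fun n : ℕ => bc a n * x ^ n) :=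
    summable_bc_mul_pow ha ha0 (by rw [abs_of_nonneg hx0]; exact hx1)
  have := hsumx.hasSum
  rw [show ∑' n, bc a n * x ^ n = F x from rfl, hFx] at this
  exact this


lemma hasSum_qc {a : ℝ} (ha : a < 1) (ha0 : a ≠ 0) {x : ℝ} (hx0 : 0 ≤ x) (hx1 : x < 1) :
    HasSum (fun m : ℕ => qc a (m + 1) * x ^ (m + 1)) ((1 - (1 - x) ^ a) / a) := by
  have H := hasSum_binomial ha ha0 hx0 hx1
  have H1 : HasSum (fun n : ℕ => bc a (n + 1) * x ^ (n + 1)) ((1 - x) ^ a - 1) := by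
    have hsum1 : (1 - x) ^ a = ((1 - x) ^ a - 1) + ∑ i ∈ Finset.range 1, bc a i * x ^ i := by
      simp [bc]
    exact (hasSum_nat_add_iff (f := fun n : ℕ => bc a n * x ^ n) 1).2 (hsum1 ▸ H)
  have H2 : HasSum (fun n : ℕ => -a * (qc a (n + 1) * x ^ (n + 1))) ((1 - x) ^ a - 1) := by
    refine H1.congr_fun fun n => ?_
    rw [bc_succ_eq ha ha0 n]
    ring
  have hval : -a * ((1 - (1 - x) ^ a) / a) = (1 - x) ^ a - 1 := by
    field_simp
    ring
  rw [← hval] at H2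
  exact (hasSum_mul_left_iff (neg_ne_zero.mpr ha0)).1 H2

lemma tsum_ofReal_qc {a : ℝ} (ha : a < 1) (ha0 : a ≠ 0) {x : ℝ} (hx0 : 0 ≤ x) (hx1 : x < 1) :
    ∑' m : ℕ, ENNReal.ofReal (qc a (m + 1) * x ^ (m + 1))
      = ENNReal.ofReal ((1 - (1 - x) ^ a) / a) := by
  have H := hasSum_qc ha ha0 hx0 hx1
  rw [← ENNReal.ofReal_tsum_of_nonneg
    (fun m => mul_nonneg (qc_succ_pos ha m).le (pow_nonneg hx0 _)) H.summable, H.tsum_eq]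

lemma Sval_nonneg {a : ℝ} (ha : a < 1) (ha0 : a ≠ 0) {x : ℝ} (hx0 : 0 ≤ x) (hx1 : x < 1) :
    0 ≤ (1 - (1 - x) ^ a) / a :=
  (hasSum_qc ha ha0 hx0 hx1).tsum_eq ▸ tsum_nonneg
    (fun m => mul_nonneg (qc_succ_pos ha m).le (pow_nonneg hx0 _))

/-- the "add one to every coordinate" map. -/
def phil (l : ℕ) : (Fin l → ℕ) → (Fin l → ℕ) := fun g k => g k + 1

lemma phil_injective (l : ℕ) : Function.Injective (phil l) := by
  intro g1 g2 h
  funext k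
  have := congrFun h k
  simpa [phil] using this

/- tsum of products over tuples -/
lemma tsum_pi_prod (w : ℕ → ℝ≥0∞) : ∀ l : ℕ,
    (∑' g : Fin l → ℕ, ∏ k, w (g k)) = (∑' m, w m) ^ l := by
  intro l
  induction l with
  | zero =>
      rw [pow_zero, tsum_eq_single (fun i => i.elim0)
        (fun b hb => absurd (Subsingleton.elim b _) hb)]
      simp
  | succ l ih =>
      rw [pow_succ', ← (Fin.consEquiv (fun _ : Fin (l + 1) => ℕ)).tsum_eq]
      have hterm : ∀ p : ℕ × (Fin l → ℕ),
          (∏ k, w ((Fin.consEquiv (fun _ : Fin (l + 1) => ℕ)) p k))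
            = w p.1 * ∏ k, w (p.2 k) := by
        intro p
        rw [Fin.prod_univ_succ]
        simp [Fin.consEquiv]
      calc (∑' p : ℕ × (Fin l → ℕ), ∏ k, w ((Fin.consEquiv (fun _ : Fin (l + 1) => ℕ)) p k))
          = ∑' p : ℕ × (Fin l → ℕ), w p.1 * ∏ k, w (p.2 k) := tsum_congr hterm
        _ = ∑' m, ∑' g : Fin l → ℕ, w m * ∏ k, w (g k) := ENNReal.tsum_prod'
        _ = ∑' m, w m * ∑' g : Fin l → ℕ, ∏ k, w (g k) :=
              tsum_congr fun m => ENNReal.tsum_mul_left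
        _ = (∑' m, w m) * (∑' m, w m) ^ l := by
              rw [ENNReal.tsum_mul_right, ih]

/- regrouping compositions by total -/
lemma tsum_regroup (w : ℕ → ℝ≥0∞) (l : ℕ) :
    (∑' n : ℕ, ∑ f ∈ (Finset.Nat.antidiagonalTuple l n).filter (fun f => ∀ k, 0 < f k),
        ∏ k, w (f k))
      = ∑' g : Fin l → ℕ, ∏ k, w (g k + 1) := by
  have step1 : ∀ n : ℕ,
      (∑ f ∈ (Finset.Nat.antidiagonalTuple l n).filter (fun f => ∀ k, 0 < f k), ∏ k, w (f k))
        = ∑' g : Fin l → ℕ, (if n = l + ∑ k, g k then ∏ k, w (g k + 1) else 0) := by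
    intro n
    classical
    set F := (Finset.Nat.antidiagonalTuple l n).filter (fun f => ∀ k, 0 < f k) with hFdef
    have A : (∑ f ∈ F, ∏ k, w (f k))
        = ∑' f : Fin l → ℕ, (if f ∈ F then ∏ k, w (f k) else 0) := by
      rw [tsum_eq_sum (s := F) (fun f hf => by simp [hf])]
      exact (Finset.sum_congr rfl fun f hf => by simp [hf]).symm
    have B : (∑' f : Fin l → ℕ, (if f ∈ F then ∏ k, w (f k) else 0))
        = ∑' g : Fin l → ℕ, (if phil l g ∈ F then ∏ k, w (phil l g k) else 0) := by
      refine ((phil_injective l).tsum_eq ?_).symm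
      intro f hf
      replace hf : (if f ∈ F then ∏ k, w (f k) else 0) ≠ 0 := hf
      have hfF : f ∈ F := by
        by_contra h
        simp [h] at hf
      have hpos : ∀ k, 0 < f k := (Finset.mem_filter.1 hfF).2
      exact ⟨fun k => f k - 1, funext fun k => Nat.succ_pred_eq_of_pos (hpos k)⟩
    have C : ∀ g : Fin l → ℕ,
        (if phil l g ∈ F then ∏ k, w (phil l g k) else 0)
          = if n = l + ∑ k, g k then ∏ k, w (g k + 1) else 0 := by
      intro g
      have hmem : phil l g ∈ F ↔ n = l + ∑ k, g k := by
        simp only [hFdef, Finset.mem_filter, Finset.Nat.mem_antidiagonalTuple]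
        constructor
        · rintro ⟨hsum, -⟩
          rw [← hsum]
          simp [phil, Finset.sum_add_distrib, add_comm]
        · intro hn
          refine ⟨?_, fun k => Nat.succ_pos _⟩
          rw [hn]
          simp [phil, Finset.sum_add_distrib, add_comm]
      by_cases hc : n = l + ∑ k, g k
      · rw [if_pos hc, if_pos (hmem.2 hc)]
        exact Finset.prod_congr rfl fun k _ => rfl
      · rw [if_neg hc, if_neg (fun hmem' => hc (hmem.1 hmem'))]
    rw [A, B]
    exact tsum_congr C
  calc (∑' n : ℕ, ∑ f ∈ (Finset.Nat.antidiagonalTuple l n).filter (fun f => ∀ k, 0 < f k),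
        ∏ k, w (f k))
      = ∑' n : ℕ, ∑' g : Fin l → ℕ, (if n = l + ∑ k, g k then ∏ k, w (g k + 1) else 0) :=
        tsum_congr step1
    _ = ∑' g : Fin l → ℕ, ∑' n : ℕ, (if n = l + ∑ k, g k then ∏ k, w (g k + 1) else 0) :=
        ENNReal.tsum_comm
    _ = ∑' g : Fin l → ℕ, ∏ k, w (g k + 1) := tsum_congr fun g => tsum_ite_eq _ _


lemma filter_empty_of_lt {l n : ℕ} (h : n < l) :
    (Finset.Nat.antidiagonalTuple l n).filter (fun f => ∀ k, 0 < f k) = ∅ := by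
  rw [Finset.filter_eq_empty_iff]
  intro f hf hpos
  have hsum : ∑ k, f k = n := Finset.Nat.mem_antidiagonalTuple.1 hf
  have hle : l ≤ ∑ k, f k := by
    calc l = ∑ _k : Fin l, 1 := by simp
      _ ≤ ∑ k, f k := Finset.sum_le_sum fun k _ => hpos k
  omega

lemma qc_nonneg {a : ℝ} (ha : a < 1) {m : ℕ} (hm : 0 < m) : 0 ≤ qc a m := by
  cases m with
  | zero => omega
  | succ m => exact (qc_succ_pos ha m).le

lemma genStirling_nonneg {a : ℝ} (ha : a < 1) (n l : ℕ) : 0 ≤ genStirling a n l := by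
  unfold genStirling
  apply mul_nonneg (by positivity)
  apply Finset.sum_nonneg
  intro f hf
  have hpos := (Finset.mem_filter.1 hf).2
  apply Finset.prod_nonneg
  intro k _
  exact qc_nonneg ha (hpos k)

lemma real_term {γ0 a p x : ℝ} (n l : ℕ) :
    x ^ n / (n.factorial : ℝ) * (γ0 ^ l * p ^ (-(a * (l : ℝ))) * genStirling a n l)
      = γ0 ^ l * p ^ (-(a * (l : ℝ))) / (l.factorial : ℝ) *
          ∑ f ∈ (Finset.Nat.antidiagonalTuple l n).filter (fun f => ∀ k, 0 < f k),
            ∏ k, (qc a (f k) * x ^ (f k)) := by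
  unfold genStirling
  have hxprod : ∀ f ∈ (Finset.Nat.antidiagonalTuple l n).filter (fun f => ∀ k, 0 < f k),
      x ^ n * ∏ k, qc a (f k) = ∏ k, (qc a (f k) * x ^ (f k)) := by
    intro f hf
    have hsum : ∑ k, f k = n :=
      Finset.Nat.mem_antidiagonalTuple.1 (Finset.mem_filter.1 hf).1
    rw [Finset.prod_mul_distrib, Finset.prod_pow_eq_pow_sum, hsum]
    ring
  have hn : ((n.factorial : ℝ)) ≠ 0 := by positivity
  rw [← Finset.sum_congr rfl hxprod, ← Finset.mul_sum]
  have hqc : (∑ f ∈ (Finset.Nat.antidiagonalTuple l n).filter (fun f => ∀ k, 0 < f k),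
        ∏ k, Real.Gamma ((f k : ℝ) - a) / (((f k).factorial : ℝ) * Real.Gamma (1 - a)))
      = ∑ f ∈ (Finset.Nat.antidiagonalTuple l n).filter (fun f => ∀ k, 0 < f k),
        ∏ k, qc a (f k) := rfl
  rw [hqc]
  field_simp

lemma hasSum_of_tsum_ofReal {f : ℕ → ℝ} (hf : ∀ n, 0 ≤ f n) {r : ℝ} (hr : 0 ≤ r)
    (h : (∑' n, ENNReal.ofReal (f n)) = ENNReal.ofReal r) : HasSum f r := by
  have hfin : (∑' n, ENNReal.ofReal (f n)) ≠ ⊤ := by rw [h]; exact ENNReal.ofReal_ne_top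
  have hsumm : Summable f := by
    refine (ENNReal.summable_toReal hfin).congr fun n => ?_
    rw [ENNReal.toReal_ofReal (hf n)]
  have h2 : ENNReal.ofReal (∑' n, f n) = ENNReal.ofReal r := by
    rw [ENNReal.ofReal_tsum_of_nonneg hf hsumm]
    exact h
  have h3 : (∑' n, f n) = r := (ENNReal.ofReal_eq_ofReal_iff (tsum_nonneg hf) hr).1 h2
  exact h3 ▸ hsumm.hasSum

lemma core_hasSum {γ0 a p : ℝ} (hγ : 0 < γ0) (ha : a < 1) (ha0 : a ≠ 0) (hp0 : 0 < p)
    {x : ℝ} (hx0 : 0 ≤ x) (hx1 : x < 1) :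
    HasSum (fun n : ℕ => x ^ n / (n.factorial : ℝ) * Dsum γ0 a p n)
      (Real.exp (γ0 * p ^ (-a) * ((1 - (1 - x) ^ a) / a))) := by
  classical
  set S : ℝ := (1 - (1 - x) ^ a) / a with hSdef
  have hS0 : 0 ≤ S := Sval_nonneg ha ha0 hx0 hx1
  set c : ℝ := γ0 * p ^ (-a) with hcdef
  have hc0 : 0 ≤ c := mul_nonneg hγ.le (Real.rpow_nonneg hp0.le _)
  set W : ℕ → ℝ≥0∞ := fun m => ENNReal.ofReal (qc a m * x ^ m) with hWdef
  set C : ℕ → ℝ≥0∞ :=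
    fun l => ENNReal.ofReal (γ0 ^ l * p ^ (-(a * (l : ℝ))) / (l.factorial : ℝ)) with hCdef
  have hcl_nonneg : ∀ l : ℕ, 0 ≤ γ0 ^ l * p ^ (-(a * (l : ℝ))) / (l.factorial : ℝ) := by
    intro l
    have := Real.rpow_nonneg hp0.le (-(a * (l : ℝ)))
    positivity
  have hterm_nonneg : ∀ (n l : ℕ), (0:ℝ) ≤ γ0 ^ l * p ^ (-(a * (l : ℝ))) * genStirling a n l := by
    intro n l
    have h1 := Real.rpow_nonneg hp0.le (-(a * (l : ℝ)))
    have h2 := genStirling_nonneg ha n l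
    positivity
  have hprod_nonneg : ∀ (l n : ℕ)
      (f : Fin l → ℕ), f ∈ (Finset.Nat.antidiagonalTuple l n).filter (fun f => ∀ k, 0 < f k) →
      ∀ k : Fin l, (0:ℝ) ≤ qc a (f k) * x ^ (f k) := by
    intro l n f hf k
    exact mul_nonneg (qc_nonneg ha ((Finset.mem_filter.1 hf).2 k)) (pow_nonneg hx0 _)
  -- the bridge for each n
  have bridge : ∀ n : ℕ,
      ENNReal.ofReal (x ^ n / (n.factorial : ℝ) * Dsum γ0 a p n)
        = ∑' l : ℕ, C l *
            ∑ f ∈ (Finset.Nat.antidiagonalTuple l n).filter (fun f => ∀ k, 0 < f k),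
              ∏ k, W (f k) := by
    intro n
    have hD : x ^ n / (n.factorial : ℝ) * Dsum γ0 a p n
        = ∑ l ∈ Finset.range (n + 1),
            x ^ n / (n.factorial : ℝ) * (γ0 ^ l * p ^ (-(a * (l : ℝ))) * genStirling a n l) := by
      rw [Dsum, Finset.mul_sum]
    rw [hD, ENNReal.ofReal_sum_of_nonneg (fun l _ => by
      have h1 := hterm_nonneg n l
      have h2 : (0:ℝ) ≤ x ^ n / (n.factorial : ℝ) := by positivity
      exact mul_nonneg h2 h1)]
    have heach : ∀ l : ℕ,
        ENNReal.ofReal (x ^ n / (n.factorial : ℝ) *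
            (γ0 ^ l * p ^ (-(a * (l : ℝ))) * genStirling a n l))
          = C l * ∑ f ∈ (Finset.Nat.antidiagonalTuple l n).filter (fun f => ∀ k, 0 < f k),
              ∏ k, W (f k) := by
      intro l
      rw [real_term n l, ENNReal.ofReal_mul (hcl_nonneg l)]
      congr 1
      rw [ENNReal.ofReal_sum_of_nonneg (fun f hf =>
        Finset.prod_nonneg (fun k _ => hprod_nonneg l n f hf k))]
      apply Finset.sum_congr rfl
      intro f hf
      rw [ENNReal.ofReal_prod_of_nonneg (fun k _ => hprod_nonneg l n f hf k)]
    rw [Finset.sum_congr rfl (fun l _ => heach l)]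
    refine (tsum_eq_sum ?_).symm
    intro l hl
    have hnl : n < l := by
      simp only [Finset.mem_range, not_lt] at hl
      omega
    rw [filter_empty_of_lt hnl]
    simp
  -- the chain in ℝ≥0∞
  have hW1 : (∑' m : ℕ, W (m + 1)) = ENNReal.ofReal S := tsum_ofReal_qc ha ha0 hx0 hx1
  have chain : (∑' n : ℕ, ENNReal.ofReal (x ^ n / (n.factorial : ℝ) * Dsum γ0 a p n))
      = ENNReal.ofReal (Real.exp (c * S)) := by
    calc (∑' n : ℕ, ENNReal.ofReal (x ^ n / (n.factorial : ℝ) * Dsum γ0 a p n))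
        = ∑' n : ℕ, ∑' l : ℕ, C l *
            ∑ f ∈ (Finset.Nat.antidiagonalTuple l n).filter (fun f => ∀ k, 0 < f k),
              ∏ k, W (f k) := tsum_congr bridge
      _ = ∑' l : ℕ, ∑' n : ℕ, C l *
            ∑ f ∈ (Finset.Nat.antidiagonalTuple l n).filter (fun f => ∀ k, 0 < f k),
              ∏ k, W (f k) := ENNReal.tsum_comm
      _ = ∑' l : ℕ, C l * ∑' n : ℕ,
            ∑ f ∈ (Finset.Nat.antidiagonalTuple l n).filter (fun f => ∀ k, 0 < f k),
              ∏ k, W (f k) := tsum_congr fun l => ENNReal.tsum_mul_left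
      _ = ∑' l : ℕ, C l * ∑' g : Fin l → ℕ, ∏ k, W (g k + 1) :=
            tsum_congr fun l => by rw [tsum_regroup W l]
      _ = ∑' l : ℕ, C l * (∑' m : ℕ, W (m + 1)) ^ l :=
            tsum_congr fun l => by rw [← tsum_pi_prod (fun m => W (m + 1)) l]
      _ = ∑' l : ℕ, ENNReal.ofReal ((c * S) ^ l / (l.factorial : ℝ)) := by
            refine tsum_congr fun l => ?_
            rw [hW1, ← ENNReal.ofReal_pow hS0, ← ENNReal.ofReal_mul (hcl_nonneg l)]
            congr 1
            have hpl : p ^ (-(a * (l : ℝ))) = (p ^ (-a)) ^ l := by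
              rw [← Real.rpow_natCast (p ^ (-a)) l, ← Real.rpow_mul hp0.le]
              ring_nf
            rw [hpl, hcdef]
            rw [mul_pow]
            ring
      _ = ENNReal.ofReal (Real.exp (c * S)) := by
            have hexp : HasSum (fun l : ℕ => (c * S) ^ l / (l.factorial : ℝ))
                (Real.exp (c * S)) := by
              rw [Real.exp_eq_exp_ℝ]
              exact NormedSpace.expSeries_div_hasSum_exp (c * S)
            rw [← ENNReal.ofReal_tsum_of_nonneg (fun l => by positivity) hexp.summable,
              hexp.tsum_eq]
  have hB_nonneg : ∀ n : ℕ, 0 ≤ x ^ n / (n.factorial : ℝ) * Dsum γ0 a p n := by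
    intro n
    apply mul_nonneg (by positivity)
    exact Finset.sum_nonneg fun l _ => hterm_nonneg n l
  exact hasSum_of_tsum_ofReal hB_nonneg (Real.exp_nonneg _) chain

end GNB

/-- Probability generating function of the generalized negative binomial distribution:
for γ0 > 0, a < 1 with a ≠ 0, 0 < p < 1 and t ∈ [0,1],
Σ_{n=0}^∞ t^n·p_N(n) = exp{−γ0·[(1 − pt)^a − (1 − p)^a]/(a·p^a)};
in particular (t = 1) the values p_N(n) sum to 1. -/
theorem gnb_pgf (γ0 a p : ℝ) (hγ : 0 < γ0) (ha : a < 1) (ha0 : a ≠ 0)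
    (hp0 : 0 < p) (hp1 : p < 1) :
    ∀ t ∈ Set.Icc (0 : ℝ) 1,
      HasSum (fun n : ℕ => t ^ n * gnbPMF γ0 a p n)
        (Real.exp (-γ0 * ((1 - p * t) ^ a - (1 - p) ^ a) / (a * p ^ a))) := by
  intro t ht
  obtain ⟨ht0, ht1⟩ := ht
  set x : ℝ := p * t with hxdef
  have hx0 : 0 ≤ x := mul_nonneg hp0.le ht0
  have hx1 : x < 1 := lt_of_le_of_lt (mul_le_of_le_one_right hp0.le ht1) hp1
  have hcore := GNB.core_hasSum hγ ha ha0 hp0 hx0 hx1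
  set eK : ℝ := Real.exp (-γ0 * (1 - (1 - p) ^ a) / (a * p ^ a)) with heK
  have hfun : ∀ n : ℕ, t ^ n * gnbPMF γ0 a p n
      = eK * (x ^ n / (n.factorial : ℝ) * Dsum γ0 a p n) := by
    intro n
    have hgnb : gnbPMF γ0 a p n
        = p ^ n / (n.factorial : ℝ) * eK * Dsum γ0 a p n := rfl
    rw [hgnb, hxdef, mul_pow]
    ring
  have H := hcore.mul_left eK
  have Hf : HasSum (fun n : ℕ => t ^ n * gnbPMF γ0 a p n)
      (eK * Real.exp (γ0 * p ^ (-a) * ((1 - (1 - x) ^ a) / a))) := by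
    refine H.congr_fun fun n => hfun n
  have hval : eK * Real.exp (γ0 * p ^ (-a) * ((1 - (1 - x) ^ a) / a))
      = Real.exp (-γ0 * ((1 - p * t) ^ a - (1 - p) ^ a) / (a * p ^ a)) := by
    rw [heK, ← Real.exp_add]
    congr 1
    have hpa : (0:ℝ) < p ^ a := Real.rpow_pos_of_pos hp0 a
    have hpna : p ^ (-a) = (p ^ a)⁻¹ := Real.rpow_neg hp0.le a
    rw [hpna, ← hxdef]
    field_simp
    ring
  rw [hval] at Hf
  exact Hf
end

section
/- For every integer n ≥ 1 and all real numbers γ0 > 0, a < 1, 0 < p < 1, one has the identity Σ_{ℓ=0}^n γ0^ℓ · p^{−a·ℓ} · S_a(n,ℓ) = γ0 · p^{−a} · R_{n,γ0,a,p}(1,1). -/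
open scoped Classical BigOperators

/-- The backward recursion `R_{n,γ0,a,p}(i,j)`: `R(n,j) = 1` and
`R(i,j) = (i − a·j)·R(i+1,j) + γ0·p^{−a}·R(i+1,j+1)` for `i < n`. -/
noncomputable def Rrec (γ0 a p : ℝ) (n : ℕ) : ℕ → ℕ → ℝ
  | i, j =>
    if _ : n ≤ i then 1
    else ((i : ℝ) - a * (j : ℝ)) * Rrec γ0 a p n (i + 1) j
      + γ0 * p ^ (-a) * Rrec γ0 a p n (i + 1) (j + 1)
  termination_by i _ => n - i
  decreasing_by all_goals omega

noncomputable def gw (a : ℝ) (m : ℕ) : ℝ :=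
  Real.Gamma ((m : ℝ) - a) / ((m.factorial : ℝ) * Real.Gamma (1 - a))

noncomputable def Asum (a : ℝ) (n l : ℕ) : ℝ :=
  ∑ f ∈ (Finset.Nat.antidiagonalTuple l n).filter (fun f => ∀ k, 0 < f k),
      ∏ k, gw a (f k)

lemma genStirling_eq (a : ℝ) (n l : ℕ) :
    genStirling a n l = (n.factorial : ℝ) / (l.factorial : ℝ) * Asum a n l := rfl

lemma gw_one (a : ℝ) (ha : a < 1) : gw a 1 = 1 := by
  have h : Real.Gamma (1 - a) ≠ 0 := (Real.Gamma_pos_of_pos (by linarith)).ne'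
  simp [gw, h]

lemma gw_rec (a : ℝ) (ha : a < 1) (m : ℕ) (hm : 1 ≤ m) :
    ((m : ℝ) + 1) * gw a (m + 1) = ((m : ℝ) - a) * gw a m := by
  have hma : (0:ℝ) < (m:ℝ) - a := by
    have : (1:ℝ) ≤ (m:ℝ) := by exact_mod_cast hm
    linarith
  have hg : Real.Gamma ((m:ℝ) + 1 - a) = ((m:ℝ) - a) * Real.Gamma ((m:ℝ) - a) := by
    have := Real.Gamma_add_one hma.ne'
    rw [← this]; ring_nf
  have hf : ((m+1).factorial : ℝ) = ((m:ℝ)+1) * (m.factorial : ℝ) := by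
    rw [Nat.factorial_succ]; push_cast; ring
  have hfm : (m.factorial : ℝ) ≠ 0 := by exact_mod_cast m.factorial_ne_zero
  have hG : Real.Gamma (1 - a) ≠ 0 := (Real.Gamma_pos_of_pos (by linarith)).ne'
  rw [gw, gw, hf]
  push_cast
  rw [hg]
  field_simp

lemma Asum_zero (a : ℝ) (n : ℕ) (hn : 1 ≤ n) : Asum a n 0 = 0 := by
  refine Finset.sum_eq_zero fun f hf => ?_
  have h := Finset.Nat.mem_antidiagonalTuple.mp (Finset.mem_filter.mp hf).1
  simp at h
  omega

lemma Asum_of_lt (a : ℝ) (n l : ℕ) (h : n < l) : Asum a n l = 0 := by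
  refine Finset.sum_eq_zero fun f hf => ?_
  rcases Finset.mem_filter.mp hf with ⟨h1, h2⟩
  have h1 := Finset.Nat.mem_antidiagonalTuple.mp h1
  have : l ≤ ∑ k, f k := by
    calc l = ∑ _k : Fin l, 1 := by simp
    _ ≤ ∑ k, f k := Finset.sum_le_sum fun k _ => h2 k
  omega

lemma Asum_one_one (a : ℝ) (ha : a < 1) : Asum a 1 1 = 1 := by
  have hset : (Finset.Nat.antidiagonalTuple 1 1).filter (fun f => ∀ k, 0 < f k)
      = {fun _ => 1} := by
    ext f
    simp only [Finset.mem_filter, Finset.Nat.mem_antidiagonalTuple, Finset.mem_singleton]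
    constructor
    · rintro ⟨h1, _⟩
      funext i
      have : i = 0 := Subsingleton.elim _ _
      subst this
      simpa [Fin.sum_univ_one] using h1
    · rintro rfl
      simp [Fin.sum_univ_one]
  rw [Asum, hset, Finset.sum_singleton]
  simp [gw_one a ha]

noncomputable def FT (l n : ℕ) : Finset (Fin l → ℕ) :=
  (Finset.Nat.antidiagonalTuple l n).filter (fun f => ∀ k, 0 < f k)

lemma mem_FT {l n : ℕ} {f : Fin l → ℕ} :
    f ∈ FT l n ↔ (∑ k, f k = n ∧ ∀ k, 0 < f k) := by
  simp [FT, Finset.Nat.mem_antidiagonalTuple]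

lemma Asum_eq_FT (a : ℝ) (n l : ℕ) : Asum a n l = ∑ f ∈ FT l n, ∏ k, gw a (f k) := rfl

/-- Part with `g k = 1`: deleting coordinate `k`. -/
lemma sum_part_one (a : ℝ) (n l : ℕ) (ha : a < 1) (k : Fin (l + 1)) :
    ∑ g ∈ (FT (l+1) (n+1)).filter (fun g => g k = 1),
        (g k : ℝ) * ∏ k', gw a (g k') = Asum a n l := by
  rw [Asum_eq_FT]
  refine Finset.sum_nbij' (fun g => Fin.removeNth k g)
    (fun h => Fin.insertNth k 1 h) ?_ ?_ ?_ ?_ ?_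
  · intro g hg
    rcases Finset.mem_filter.mp hg with ⟨hg1, hgk⟩
    rcases mem_FT.mp hg1 with ⟨hsum, hpos⟩
    rw [Fin.sum_univ_succAbove g k, hgk] at hsum
    refine mem_FT.mpr ⟨?_, fun k' => ?_⟩
    · simpa [Fin.removeNth] using (by omega : ∑ i, g (k.succAbove i) = n)
    · simpa [Fin.removeNth] using hpos _
  · intro h hh
    rcases mem_FT.mp hh with ⟨hsum, hpos⟩
    refine Finset.mem_filter.mpr ⟨mem_FT.mpr ⟨?_, fun k' => ?_⟩, by simp⟩
    · rw [Fin.sum_univ_succAbove (k.insertNth 1 h) k]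
      simp [hsum, Nat.add_comm]
    · refine k.succAboveCases ?_ (fun i => ?_) k' <;> simp [hpos]
  · intro g hg
    rcases Finset.mem_filter.mp hg with ⟨_, hgk⟩
    show k.insertNth 1 (k.removeNth g) = g
    rw [Fin.insertNth_removeNth]
    funext k'
    rcases eq_or_ne k' k with rfl | hne
    · simp [hgk]
    · simp [Function.update_of_ne hne]
  · intro h _
    simp
  · intro g hg
    rcases Finset.mem_filter.mp hg with ⟨_, hgk⟩
    rw [Fin.prod_univ_succAbove (fun k' => gw a (g k')) k, hgk, gw_one a ha]
    simp [Fin.removeNth]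

lemma sum_update_single {l : ℕ} (f : Fin l → ℕ) (k : Fin l) (b : ℕ) :
    (∑ k', Function.update f k b k') + f k = (∑ k', f k') + b := by
  rw [Finset.sum_update_of_mem (Finset.mem_univ k),
    Finset.sum_eq_sum_sdiff_singleton_add (Finset.mem_univ k) f]
  ring

/-- Part with `g k ≥ 2`: decrementing coordinate `k`. -/
lemma sum_part_ge_two (a : ℝ) (n l : ℕ) (ha : a < 1) (k : Fin (l + 1)) :
    ∑ f ∈ FT (l+1) n, ((f k : ℝ) - a) * ∏ k', gw a (f k')
      = ∑ g ∈ (FT (l+1) (n+1)).filter (fun g => ¬ g k = 1),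
          (g k : ℝ) * ∏ k', gw a (g k') := by
  refine Finset.sum_nbij' (fun f => Function.update f k (f k + 1))
    (fun g => Function.update g k (g k - 1)) ?_ ?_ ?_ ?_ ?_
  · intro f hf
    rcases mem_FT.mp hf with ⟨hsum, hpos⟩
    have hupd := sum_update_single f k (f k + 1)
    have hfk := hpos k
    have hmem : ∑ k', Function.update f k (f k + 1) k' = n + 1 := by
      exact Nat.add_right_cancel (hupd.trans (by rw [hsum]; omega))
    refine Finset.mem_filter.mpr ⟨mem_FT.mpr ⟨hmem, fun k' => ?_⟩, by simp; omega⟩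
    · rcases eq_or_ne k' k with rfl | hne
      · simp
      · simpa [Function.update_of_ne hne] using hpos k'
  · intro g hg
    rcases Finset.mem_filter.mp hg with ⟨hg1, hgk⟩
    rcases mem_FT.mp hg1 with ⟨hsum, hpos⟩
    have hk2 : 2 ≤ g k := by have := hpos k; omega
    have hupd := sum_update_single g k (g k - 1)
    have hmem : ∑ k', Function.update g k (g k - 1) k' = n := by
      exact Nat.add_right_cancel (hupd.trans (by rw [hsum]; omega))
    refine mem_FT.mpr ⟨hmem, fun k' => ?_⟩
    · rcases eq_or_ne k' k with rfl | hne
      · simpa using by omega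
      · simpa [Function.update_of_ne hne] using hpos k'
  · intro f hf
    funext k'
    rcases eq_or_ne k' k with rfl | hne
    · simp
    · simp [Function.update_of_ne hne]
  · intro g hg
    rcases Finset.mem_filter.mp hg with ⟨hg1, hgk⟩
    rcases mem_FT.mp hg1 with ⟨_, hpos⟩
    have hk1 : 1 ≤ g k := hpos k
    funext k'
    rcases eq_or_ne k' k with rfl | hne
    · simp; omega
    · simp [Function.update_of_ne hne]
  · intro f hf
    rcases mem_FT.mp hf with ⟨hsum, hpos⟩
    show ((f k : ℝ) - a) * ∏ k', gw a (f k')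
      = ((Function.update f k (f k + 1) k : ℕ) : ℝ) * ∏ k', gw a (Function.update f k (f k + 1) k')
    have h1 : ∏ k', gw a (Function.update f k (f k + 1) k')
        = gw a (f k + 1) * ∏ k' ∈ Finset.univ \ {k}, gw a (f k') := by
      rw [Finset.prod_eq_mul_prod_sdiff_singleton_of_mem (Finset.mem_univ k)
        (fun k' => gw a (Function.update f k (f k + 1) k')), Function.update_self]
      congr 1
      refine Finset.prod_congr rfl fun k' hk' => ?_
      have hne : k' ≠ k := by simpa using (Finset.mem_sdiff.mp hk').2
      rw [Function.update_of_ne hne]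
    have h2 : ∏ k', gw a (f k') = gw a (f k) * ∏ k' ∈ Finset.univ \ {k}, gw a (f k') :=
      Finset.prod_eq_mul_prod_sdiff_singleton_of_mem (Finset.mem_univ k) _
    rw [h1, h2, Function.update_self]
    have hrec := gw_rec a ha (f k) (hpos k)
    push_cast
    push_cast at hrec
    linear_combination (-(∏ k' ∈ Finset.univ \ {k}, gw a (f k'))) * hrec

lemma Asum_rec (a : ℝ) (ha : a < 1) (n l : ℕ) :
    ((n:ℝ) + 1) * Asum a (n+1) (l+1)
      = ((n:ℝ) - a * ((l:ℝ) + 1)) * Asum a n (l+1) + ((l:ℝ) + 1) * Asum a n l := by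
  have key : ∀ k : Fin (l+1),
      ∑ g ∈ FT (l+1) (n+1), (g k : ℝ) * ∏ k', gw a (g k')
        = (∑ f ∈ FT (l+1) n, ((f k : ℝ) - a) * ∏ k', gw a (f k')) + Asum a n l := by
    intro k
    rw [← Finset.sum_filter_add_sum_filter_not (FT (l+1) (n+1)) (fun g => g k = 1),
      sum_part_one a n l ha k, ← sum_part_ge_two a n l ha k]
    ring
  have lhs : ((n:ℝ) + 1) * Asum a (n+1) (l+1)
      = ∑ k : Fin (l+1), ∑ g ∈ FT (l+1) (n+1), (g k : ℝ) * ∏ k', gw a (g k') := by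
    rw [Finset.sum_comm, Asum_eq_FT, Finset.mul_sum]
    refine Finset.sum_congr rfl fun g hg => ?_
    rcases mem_FT.mp hg with ⟨hsum, _⟩
    have hc : (∑ k, (g k : ℝ)) = (n:ℝ) + 1 := by exact_mod_cast congrArg (Nat.cast (R := ℝ)) hsum
    rw [← Finset.sum_mul, hc]
  rw [lhs, Finset.sum_congr rfl (fun k _ => key k), Finset.sum_add_distrib]
  congr 1
  · rw [Finset.sum_comm]
    rw [Asum_eq_FT, Finset.mul_sum]
    refine Finset.sum_congr rfl fun f hf => ?_
    rcases mem_FT.mp hf with ⟨hsum, _⟩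
    have hc : (∑ k, (f k : ℝ)) = (n:ℝ) := by exact_mod_cast congrArg (Nat.cast (R := ℝ)) hsum
    rw [← Finset.sum_mul, Finset.sum_sub_distrib, hc, Finset.sum_const, Finset.card_univ,
      Fintype.card_fin, nsmul_eq_mul]
    push_cast
    ring_nf
  · rw [Finset.sum_const, Finset.card_univ, Fintype.card_fin, nsmul_eq_mul]
    push_cast
    ring

lemma genStirling_succ (a : ℝ) (ha : a < 1) (n l : ℕ) :
    genStirling a (n+1) (l+1)
      = ((n:ℝ) - a * ((l:ℝ) + 1)) * genStirling a n (l+1) + genStirling a n l := by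
  rw [genStirling_eq, genStirling_eq, genStirling_eq]
  have h := Asum_rec a ha n l
  have hfn : ((n+1).factorial : ℝ) = ((n:ℝ)+1) * (n.factorial : ℝ) := by
    rw [Nat.factorial_succ]; push_cast; ring
  have hfl : ((l+1).factorial : ℝ) = ((l:ℝ)+1) * (l.factorial : ℝ) := by
    rw [Nat.factorial_succ]; push_cast; ring
  have h1 : (0:ℝ) < (n:ℝ) + 1 := by positivity
  have h2 : (0:ℝ) < (l:ℝ) + 1 := by positivity
  have h3 : (0:ℝ) < (n.factorial : ℝ) := by exact_mod_cast n.factorial_pos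
  have h4 : (0:ℝ) < (l.factorial : ℝ) := by exact_mod_cast l.factorial_pos
  rw [hfn, hfl]
  field_simp
  linear_combination h

lemma genStirling_zero (a : ℝ) (n : ℕ) (hn : 1 ≤ n) : genStirling a n 0 = 0 := by
  rw [genStirling_eq, Asum_zero a n hn, mul_zero]

lemma genStirling_of_lt (a : ℝ) (n l : ℕ) (h : n < l) : genStirling a n l = 0 := by
  rw [genStirling_eq, Asum_of_lt a n l h, mul_zero]

lemma genStirling_one_one (a : ℝ) (ha : a < 1) : genStirling a 1 1 = 1 := by
  rw [genStirling_eq, Asum_one_one a ha]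
  norm_num

noncomputable def Coef (a : ℝ) (n : ℕ) : ℕ → ℕ → ℕ → ℝ
  | i, j, l =>
    if _ : n ≤ i then (if l = 0 then 1 else 0)
    else ((i : ℝ) - a * (j : ℝ)) * Coef a n (i + 1) j l
      + (if l = 0 then 0 else Coef a n (i + 1) (j + 1) (l - 1))
  termination_by i _ _ => n - i
  decreasing_by all_goals omega

lemma Coef_stop (a : ℝ) {n i : ℕ} (j l : ℕ) (h : n ≤ i) :
    Coef a n i j l = if l = 0 then 1 else 0 := by
  rw [Coef, dif_pos h]

lemma Coef_step (a : ℝ) {n i : ℕ} (j l : ℕ) (h : i < n) :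
    Coef a n i j l = ((i : ℝ) - a * (j : ℝ)) * Coef a n (i + 1) j l
      + (if l = 0 then 0 else Coef a n (i + 1) (j + 1) (l - 1)) := by
  rw [Coef, dif_neg (by omega)]

lemma Coef_vanish (a : ℝ) (n : ℕ) :
    ∀ d i j l, n ≤ i + d → n < i + l → 1 ≤ l → Coef a n i j l = 0 := by
  intro d
  induction d with
  | zero =>
    intro i j l h1 h2 h3
    rw [Coef_stop a j l (by omega)]
    rw [if_neg (by omega)]
  | succ d ih =>
    intro i j l h1 h2 h3
    by_cases hni : n ≤ i
    · rw [Coef_stop a j l hni]; simp; omega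
    · rw [Coef_step a j l (by omega)]
      rw [ih (i+1) j l (by omega) (by omega) h3]
      rcases l with _ | l
      · omega
      · rcases l with _ | l
        · omega
        · show (_ : ℝ) * 0 + Coef a n (i+1) (j+1) (l + 1) = 0
          rw [ih (i+1) (j+1) (l+1) (by omega) (by omega) (by omega)]
          ring

lemma Coef_succ_base (a : ℝ) (n j l : ℕ) :
    Coef a (n+1) n j l = ((n : ℝ) - a * ((j : ℝ) + (l : ℝ))) * Coef a n n j l
      + (if l = 0 then 0 else Coef a n n j (l - 1)) := by
  rw [Coef_step a j l (Nat.lt_succ_self n), Coef_stop a j l (le_refl n),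
    Coef_stop (n := n+1) a j l (le_refl (n+1))]
  rcases l with _ | l
  · norm_num
  · rcases l with _ | l
    · rw [Coef_stop (n := n+1) a (j+1) 0 (le_refl (n+1)),
        Coef_stop (n := n) a j 0 (le_refl n)]
      norm_num
    · simp only [Nat.add_sub_cancel, if_neg (Nat.succ_ne_zero _)]
      rw [Coef_stop (n := n+1) a (j+1) (l+1) (by omega),
        Coef_stop (n := n) a j (l+1) (le_refl n)]
      norm_num

lemma Coef_succ (a : ℝ) (n : ℕ) :
    ∀ d i j l, n ≤ i + d → i ≤ n →
      Coef a (n+1) i j l = ((n : ℝ) - a * ((j : ℝ) + (l : ℝ))) * Coef a n i j l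
        + (if l = 0 then 0 else Coef a n i j (l - 1)) := by
  intro d
  induction d with
  | zero =>
    intro i j l h1 h2
    have hin : i = n := by omega
    subst hin
    exact Coef_succ_base a i j l
  | succ d ih =>
    intro i j l h1 h2
    by_cases hni : n ≤ i
    · have hin : i = n := by omega
      subst hin
      exact Coef_succ_base a i j l
    · have hin : i < n := by omega
      rw [Coef_step a j l (by omega : i < n + 1),
        Coef_step (n := n) a j l hin,
        ih (i+1) j l (by omega) (by omega)]
      rcases l with _ | l
      · norm_num
        ring
      · simp only [Nat.add_sub_cancel, if_neg (Nat.succ_ne_zero _)]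
        rw [ih (i+1) (j+1) l (by omega) (by omega)]
        rcases l with _ | l
        · rw [Coef_step (n := n) a j 0 hin]
          norm_num
          ring
        · rw [Coef_step (n := n) a j (l+1) hin]
          norm_num
          ring

lemma Rrec_stop (γ0 a p : ℝ) {n i : ℕ} (j : ℕ) (h : n ≤ i) : Rrec γ0 a p n i j = 1 := by
  rw [Rrec, dif_pos h]

lemma Rrec_step (γ0 a p : ℝ) {n i : ℕ} (j : ℕ) (h : i < n) :
    Rrec γ0 a p n i j = ((i : ℝ) - a * (j : ℝ)) * Rrec γ0 a p n (i + 1) j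
      + γ0 * p ^ (-a) * Rrec γ0 a p n (i + 1) (j + 1) := by
  rw [Rrec, dif_neg (by omega)]

lemma Rrec_eq_sum (γ0 a p : ℝ) (n : ℕ) (hn : 1 ≤ n) :
    ∀ d i j, n ≤ i + d →
      Rrec γ0 a p n i j
        = ∑ l ∈ Finset.range (n+1), (γ0 * p ^ (-a)) ^ l * Coef a n i j l := by
  intro d
  induction d with
  | zero =>
    intro i j h1
    rw [Rrec_stop γ0 a p j (by omega), Finset.sum_eq_single 0]
    · rw [Coef_stop a j 0 (by omega)]
      norm_num
    · intro l hl hl0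
      rw [Coef_stop a j l (by omega), if_neg hl0, mul_zero]
    · intro h
      exact absurd (Finset.mem_range.mpr (by omega)) h
  | succ d ih =>
    intro i j h1
    by_cases hni : n ≤ i
    · rw [Rrec_stop γ0 a p j hni, Finset.sum_eq_single 0]
      · rw [Coef_stop a j 0 hni]
        norm_num
      · intro l hl hl0
        rw [Coef_stop a j l hni, if_neg hl0, mul_zero]
      · intro h
        exact absurd (Finset.mem_range.mpr (by omega)) h
    · have hin : i < n := by omega
      rw [Rrec_step γ0 a p j hin, ih (i+1) j (by omega), ih (i+1) (j+1) (by omega)]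
      have hC : Coef a n (i+1) (j+1) n = 0 :=
        Coef_vanish a n n (i+1) (j+1) n (by omega) (by omega) hn
      have expand : ∑ l ∈ Finset.range (n+1), (γ0 * p ^ (-a)) ^ l * Coef a n i j l
          = (∑ l ∈ Finset.range (n+1), (γ0 * p ^ (-a)) ^ l
              * (((i:ℝ) - a * (j:ℝ)) * Coef a n (i+1) j l))
            + ∑ l ∈ Finset.range (n+1), (γ0 * p ^ (-a)) ^ l
              * (if l = 0 then (0:ℝ) else Coef a n (i+1) (j+1) (l-1)) := by
        rw [← Finset.sum_add_distrib]
        refine Finset.sum_congr rfl fun l _ => ?_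
        rw [Coef_step a j l hin]; ring
      rw [expand]
      congr 1
      · rw [Finset.mul_sum]
        exact Finset.sum_congr rfl fun l _ => by ring
      · rw [Finset.sum_range_succ' (fun l => (γ0 * p ^ (-a)) ^ l
            * (if l = 0 then (0:ℝ) else Coef a n (i+1) (j+1) (l-1))) n]
        simp only [Nat.add_sub_cancel, if_neg (Nat.succ_ne_zero _), if_pos rfl, mul_zero,
          add_zero, pow_zero, if_true, one_mul, Nat.zero_sub, eq_self_iff_true]
        rw [Finset.sum_range_succ (fun l => (γ0 * p ^ (-a)) ^ l * Coef a n (i+1) (j+1) l) n,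
          hC, mul_zero, add_zero, Finset.mul_sum]
        exact Finset.sum_congr rfl fun l _ => by ring

lemma gS_coef (a : ℝ) (ha : a < 1) :
    ∀ n, 1 ≤ n → ∀ l, genStirling a n (l+1) = Coef a n 1 1 l := by
  intro n hn
  induction n, hn using Nat.le_induction with
  | base =>
    intro l
    rw [Coef_stop a 1 l le_rfl]
    rcases l with _ | l
    · rw [if_pos rfl, genStirling_one_one a ha]
    · rw [if_neg (Nat.succ_ne_zero _), genStirling_of_lt a 1 (l+2) (by omega)]
  | succ n hn ih =>
    intro l
    rw [genStirling_succ a ha n l,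
      Coef_succ a n (n-1) 1 1 l (by omega) (by omega)]
    rcases l with _ | l
    · rw [genStirling_zero a n hn, ih 0]
      push_cast
      ring
    · rw [ih (l+1), if_neg (Nat.succ_ne_zero _), Nat.add_sub_cancel, ih l]
      push_cast
      ring

/-- For n ≥ 1, γ0 > 0, a < 1, 0 < p < 1:
Σ_{ℓ=0}^n γ0^ℓ·p^{−a·ℓ}·S_a(n,ℓ) = γ0·p^{−a}·R_{n,γ0,a,p}(1,1). -/
theorem Dsum_eq_Rrec (n : ℕ) (hn : 1 ≤ n) (γ0 a p : ℝ)
    (hγ : 0 < γ0) (ha : a < 1) (hp0 : 0 < p) (hp1 : p < 1) :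
    Dsum γ0 a p n = γ0 * p ^ (-a) * Rrec γ0 a p n 1 1 := by
  have hx : ∀ l : ℕ, γ0 ^ l * p ^ (-(a * (l : ℝ))) = (γ0 * p ^ (-a)) ^ l := by
    intro l
    rw [mul_pow, ← Real.rpow_natCast (p ^ (-a)) l, ← Real.rpow_mul hp0.le]
    congr 1
    ring
  have hrw : Dsum γ0 a p n
      = ∑ l ∈ Finset.range (n+1), (γ0 * p ^ (-a)) ^ l * genStirling a n l := by
    rw [Dsum]
    exact Finset.sum_congr rfl fun l _ => by rw [hx l]
  rw [hrw, Finset.sum_range_succ' (fun l => (γ0 * p ^ (-a)) ^ l * genStirling a n l) n]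
  rw [Rrec_eq_sum γ0 a p n hn n 1 1 (by omega)]
  rw [Finset.sum_range_succ (fun l => (γ0 * p ^ (-a)) ^ l * Coef a n 1 1 l) n,
    Coef_vanish a n n 1 1 n (by omega) (by omega) hn]
  simp only [pow_zero, one_mul, mul_zero, add_zero, genStirling_zero a n hn]
  rw [Finset.mul_sum]
  refine Finset.sum_congr rfl fun l _ => ?_
  rw [gS_coef a ha n hn l]
  ring
end

section
/- Let n ≥ 2 be an integer, let γ0 > 0, a < 1, 0 < p < 1 be real, and let σ be a set partition of {1,…,n−1} with l blocks. Then the sum of w_n(π) over all set partitions π of {1,…,n} whose restriction to {1,…,n−1} equals σ (i.e., π is obtained from σ by either adding {n} as a new singleton block or inserting n into one of the l blocks of σ) equals w_{n−1}(σ) · (D_{n−1}/D_n) · [γ0·p^{−a} + (n−1) − a·l]. In particular, unless this correction factor equals 1, the family of exchangeable partition probability functions w_n violates the addition rule of a partition structure, so the partition distribution depends on the sample size n. -/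
open scoped Classical BigOperators

/-- A finite family of blocks forming a set partition of `Fin n`. -/
def IsPartition {n : ℕ} (P : Finset (Finset (Fin n))) : Prop :=
  ∅ ∉ P ∧ ∀ x : Fin n, ∃! B, B ∈ P ∧ x ∈ B

/-- The finite set of all set partitions of `{1,…,n}` (modeled as `Fin n`). -/
noncomputable def partitionsOf (n : ℕ) : Finset (Finset (Finset (Fin n))) :=
  Finset.univ.filter IsPartition

/-- The generalized Chinese restaurant sampling formula weight of a family of blocks
`P`, for sample size `m`:
`w_m(P) = γ0^{|P|} · p^{−a·|P|} · ∏_{B∈P} Γ(|B|−a)/Γ(1−a) / D_m`. -/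
noncomputable def crsfW (γ0 a p : ℝ) (m : ℕ) {n : ℕ} (P : Finset (Finset (Fin n))) : ℝ :=
  γ0 ^ P.card * p ^ (-(a * (P.card : ℝ))) *
    (∏ B ∈ P, Real.Gamma ((B.card : ℝ) - a) / Real.Gamma (1 - a)) / Dsum γ0 a p m

/-- The restriction of a family of blocks to the first `i` elements of `Fin n`:
intersect each block with `{x | x < i}` and drop the empty pieces. -/
noncomputable def restrictFirst (n i : ℕ) (P : Finset (Finset (Fin n))) :
    Finset (Finset (Fin n)) :=
  (P.image fun B => B.filter fun x => (x : ℕ) < i).filter fun B => B.Nonempty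

/-- A set partition of the first `i` elements of `Fin n`. -/
def IsPartitionOn (n i : ℕ) (P : Finset (Finset (Fin n))) : Prop :=
  ∅ ∉ P ∧ (∀ B ∈ P, ∀ x ∈ B, (x : ℕ) < i) ∧
    ∀ x : Fin n, (x : ℕ) < i → ∃! B, B ∈ P ∧ x ∈ B

private lemma genStirling_nonneg {a : ℝ} (ha : a < 1) (n l : ℕ) : 0 ≤ genStirling a n l := by
  unfold genStirling
  apply mul_nonneg (by positivity)
  apply Finset.sum_nonneg
  intro f hf
  simp only [Finset.mem_filter] at hf
  apply Finset.prod_nonneg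
  intro k _
  have h0 : (1:ℝ) ≤ (f k : ℝ) := by exact_mod_cast hf.2 k
  have h1 : (0:ℝ) < (f k : ℝ) - a := by linarith
  have h2 := Real.Gamma_pos_of_pos h1
  have hg := Real.Gamma_pos_of_pos (show (0:ℝ) < 1 - a by linarith)
  have h3 : (0:ℝ) < ((f k).factorial : ℝ) := by exact_mod_cast (f k).factorial_pos
  positivity

private lemma genStirling_diag_pos {a : ℝ} (ha : a < 1) (n : ℕ) : 0 < genStirling a n n := by
  have hg := Real.Gamma_pos_of_pos (show (0:ℝ) < 1 - a by linarith)
  unfold genStirling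
  apply mul_pos (by positivity)
  apply Finset.sum_pos'
  · intro f hf
    simp only [Finset.mem_filter] at hf
    apply Finset.prod_nonneg
    intro k _
    have h0 : (1:ℝ) ≤ (f k : ℝ) := by exact_mod_cast hf.2 k
    have h1 : (0:ℝ) < (f k : ℝ) - a := by linarith
    have h2 := Real.Gamma_pos_of_pos h1
    have h3 : (0:ℝ) < ((f k).factorial : ℝ) := by exact_mod_cast (f k).factorial_pos
    positivity
  · refine ⟨fun _ => 1, ?_, ?_⟩
    · simp [Finset.Nat.mem_antidiagonalTuple]
    · apply Finset.prod_pos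
      intro k _
      simp only [Nat.cast_one, Nat.factorial_one]
      have h1 : (0:ℝ) < (1:ℝ) - a := by linarith
      have h2 := Real.Gamma_pos_of_pos h1
      positivity

private lemma Dsum_pos {γ0 a p : ℝ} (hγ : 0 < γ0) (ha : a < 1) (hp0 : 0 < p) (n : ℕ) :
    0 < Dsum γ0 a p n := by
  unfold Dsum
  apply Finset.sum_pos'
  · intro i _
    have h1 := genStirling_nonneg ha n i
    have h2 : (0:ℝ) < p ^ (-(a * (i:ℝ))) := Real.rpow_pos_of_pos hp0 _
    positivity
  · refine ⟨n, Finset.self_mem_range_succ n, ?_⟩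
    have h1 := genStirling_diag_pos ha n
    have h2 : (0:ℝ) < p ^ (-(a * (n:ℝ))) := Real.rpow_pos_of_pos hp0 _
    positivity

/-- Violation of the addition rule: for n ≥ 2 and a set partition σ of {1,…,n−1}
with l blocks, the sum of w_n(π) over all set partitions π of {1,…,n} whose
restriction to {1,…,n−1} equals σ is
w_{n−1}(σ) · (D_{n−1}/D_n) · [γ0·p^{−a} + (n−1) − a·l]. -/
theorem crsf_marginal_one_step (n : ℕ) (hn : 2 ≤ n) (γ0 a p : ℝ)
    (hγ : 0 < γ0) (ha : a < 1) (hp0 : 0 < p) (hp1 : p < 1)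
    (σ : Finset (Finset (Fin n))) (hσ : IsPartitionOn n (n - 1) σ)
    (l : ℕ) (hl : σ.card = l) :
    ∑ π ∈ (partitionsOf n).filter (fun π => restrictFirst n (n - 1) π = σ),
        crsfW γ0 a p n π
      = crsfW γ0 a p (n - 1) σ * (Dsum γ0 a p (n - 1) / Dsum γ0 a p n) *
          (γ0 * p ^ (-a) + ((n : ℝ) - 1) - a * (l : ℝ)) := by
  classical
  set m := n - 1 with hm
  have hmn : m < n := by omega
  have hm1 : 1 ≤ m := by omega
  set t : Fin n := ⟨m, hmn⟩ with ht
  have htv : (t : ℕ) = m := rfl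
  obtain ⟨hσ0, hσlt, hσex⟩ := hσ
  have hσne : ∀ B ∈ σ, B.Nonempty := fun B hB =>
    Finset.nonempty_iff_ne_empty.2 (fun h => hσ0 (h ▸ hB))
  have htB : ∀ B ∈ σ, t ∉ B := fun B hB h => by
    have := hσlt B hB t h; omega
  have hne_t : ∀ x : Fin n, x ≠ t → (x : ℕ) < m := by
    intro x hx
    have h1 : (x:ℕ) < n := x.isLt
    have h2 : (x:ℕ) ≠ m := fun h => hx (Fin.ext h)
    omega
  -- the filter always removes exactly t
  have hfilt : ∀ B : Finset (Fin n), (B.filter fun x : Fin n => (x:ℕ) < m) = B.erase t := by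
    intro B; ext x
    simp only [Finset.mem_filter, Finset.mem_erase]
    constructor
    · rintro ⟨hx, hlt⟩
      refine ⟨fun h => ?_, hx⟩
      subst h; omega
    · rintro ⟨hne, hx⟩; exact ⟨hx, hne_t x hne⟩
  have hres_eq : ∀ P : Finset (Finset (Fin n)), restrictFirst n m P =
      (P.image fun B => B.erase t).filter (fun B => B.Nonempty) := by
    intro P; unfold restrictFirst; congr 1
    exact Finset.image_congr (fun B _ => hfilt B)
  have himg : ∀ s : Finset (Finset (Fin n)), s ⊆ σ →
      (s.image fun B => B.erase t) = s := by
    intro s hs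
    have h1 : Finset.image (fun B => B.erase t) s = Finset.image id s :=
      Finset.image_congr (fun B hB =>
        Finset.erase_eq_of_notMem (htB B (hs (Finset.mem_coe.1 hB))))
    rw [h1, Finset.image_id]
  set newP : Finset (Finset (Fin n)) := insert {t} σ with hnewP
  set insP : Finset (Fin n) → Finset (Finset (Fin n)) :=
    fun B => insert (insert t B) (σ.erase B) with hinsP
  have htnotσ : ({t} : Finset (Fin n)) ∉ σ := fun h => htB _ h (Finset.mem_singleton_self t)
  have htinsnot : ∀ B, insert t B ∉ σ.erase B := fun B h =>
    htB _ (Finset.mem_of_mem_erase h) (Finset.mem_insert_self t B)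
  -- restriction computations
  have hres_new : restrictFirst n m newP = σ := by
    rw [hres_eq, hnewP, Finset.image_insert, himg σ (le_refl σ)]
    rw [Finset.erase_singleton]
    rw [Finset.filter_insert]
    simp only [Finset.not_nonempty_empty, if_false]
    exact Finset.filter_true_of_mem hσne
  have hres_ins : ∀ B ∈ σ, restrictFirst n m (insP B) = σ := by
    intro B hB
    rw [hres_eq, hinsP]
    simp only
    rw [Finset.image_insert, himg _ (Finset.erase_subset B σ),
      Finset.erase_insert (htB B hB), Finset.insert_erase hB]
    exact Finset.filter_true_of_mem hσne
  -- partition proofs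
  have hpart_new : IsPartition newP := by
    constructor
    · intro h
      rcases Finset.mem_insert.1 h with h | h
      · exact Finset.singleton_ne_empty t h.symm
      · exact hσ0 h
    · intro x
      by_cases hx : x = t
      · subst hx
        refine ⟨{t}, ⟨Finset.mem_insert_self _ _, Finset.mem_singleton_self t⟩, ?_⟩
        rintro D ⟨hD, hxD⟩
        rcases Finset.mem_insert.1 hD with rfl | hD
        · rfl
        · exact (htB D hD hxD).elim
      · obtain ⟨C, ⟨hCσ, hxC⟩, huC⟩ := hσex x (hne_t x hx)
        refine ⟨C, ⟨Finset.mem_insert_of_mem hCσ, hxC⟩, ?_⟩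
        rintro D ⟨hD, hxD⟩
        rcases Finset.mem_insert.1 hD with rfl | hD
        · exact (hx (Finset.mem_singleton.1 hxD)).elim
        · exact huC D ⟨hD, hxD⟩
  have hpart_ins : ∀ B ∈ σ, IsPartition (insP B) := by
    intro B hB
    constructor
    · intro h
      rcases Finset.mem_insert.1 h with h | h
      · exact (Finset.insert_ne_empty t B) h.symm
      · exact hσ0 (Finset.mem_of_mem_erase h)
    · intro x
      by_cases hx : x = t
      · subst hx
        refine ⟨insert t B, ⟨Finset.mem_insert_self _ _, Finset.mem_insert_self t B⟩, ?_⟩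
        rintro D ⟨hD, hxD⟩
        rcases Finset.mem_insert.1 hD with rfl | hD
        · rfl
        · exact (htB D (Finset.mem_of_mem_erase hD) hxD).elim
      · obtain ⟨C, ⟨hCσ, hxC⟩, huC⟩ := hσex x (hne_t x hx)
        by_cases hCB : C = B
        · subst hCB
          refine ⟨insert t C, ⟨Finset.mem_insert_self _ _,
            Finset.mem_insert_of_mem hxC⟩, ?_⟩
          rintro D ⟨hD, hxD⟩
          rcases Finset.mem_insert.1 hD with rfl | hD
          · rfl
          · exact ((Finset.mem_erase.1 hD).1
              (huC D ⟨Finset.mem_of_mem_erase hD, hxD⟩)).elim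
        · refine ⟨C, ⟨Finset.mem_insert_of_mem (Finset.mem_erase.2 ⟨hCB, hCσ⟩), hxC⟩, ?_⟩
          rintro D ⟨hD, hxD⟩
          rcases Finset.mem_insert.1 hD with rfl | hD
          · rcases Finset.mem_insert.1 hxD with rfl | hxB
            · exact (hx rfl).elim
            · exact (hCB (huC B ⟨hB, hxB⟩ ▸ rfl)).elim
          · exact huC D ⟨Finset.mem_of_mem_erase hD, hxD⟩
  -- classification of the fiber
  have hset : (partitionsOf n).filter (fun π => restrictFirst n m π = σ)
      = insert newP (σ.image insP) := by
    ext π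
    simp only [Finset.mem_filter, partitionsOf, Finset.mem_univ, true_and,
      Finset.mem_insert, Finset.mem_image]
    constructor
    · rintro ⟨hπ, hres⟩
      obtain ⟨hπ0, hπex⟩ := hπ
      obtain ⟨Bt, ⟨hBtπ, htBt⟩, huBt⟩ := hπex t
      have hother : ∀ C ∈ π, C ≠ Bt → t ∉ C := fun C hC hne h => hne (huBt C ⟨hC, h⟩)
      have hπne : ∀ C ∈ π, C.Nonempty := fun C hC =>
        Finset.nonempty_iff_ne_empty.2 (fun h => hπ0 (h ▸ hC))
      have himgπ : (π.erase Bt).image (fun B => B.erase t) = π.erase Bt := by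
        have h1 : (π.erase Bt).image (fun B => B.erase t) = (π.erase Bt).image id :=
          Finset.image_congr (fun C hC => Finset.erase_eq_of_notMem
            (hother C (Finset.mem_of_mem_erase (Finset.mem_coe.1 hC))
              (Finset.mem_erase.1 (Finset.mem_coe.1 hC)).1))
        rw [h1, Finset.image_id]
      have himgπ2 : π.image (fun B => B.erase t) = insert (Bt.erase t) (π.erase Bt) := by
        conv_lhs => rw [← Finset.insert_erase hBtπ]
        rw [Finset.image_insert, himgπ]
      have hσeq : σ = (insert (Bt.erase t) (π.erase Bt)).filter (fun B => B.Nonempty) := by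
        rw [← hres, hres_eq, himgπ2]
      have hπerne : ∀ C ∈ π.erase Bt, C.Nonempty := fun C hC =>
        hπne C (Finset.mem_of_mem_erase hC)
      by_cases hBte : (Bt.erase t).Nonempty
      · right
        have hσeq2 : σ = insert (Bt.erase t) (π.erase Bt) := by
          rw [hσeq, Finset.filter_insert, if_pos hBte, Finset.filter_true_of_mem hπerne]
        refine ⟨Bt.erase t, by rw [hσeq2]; exact Finset.mem_insert_self _ _, ?_⟩
        have hBnotπ : Bt.erase t ∉ π.erase Bt := by
          intro h
          obtain ⟨x, hx⟩ := hBte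
          obtain ⟨D, _, huD⟩ := hπex x
          have h1 : Bt.erase t = D := huD _ ⟨Finset.mem_of_mem_erase h, hx⟩
          have h2 : Bt = D := huD _ ⟨hBtπ, Finset.mem_of_mem_erase hx⟩
          exact (Finset.mem_erase.1 h).1 (h1.trans h2.symm)
        rw [hinsP]
        simp only
        rw [Finset.insert_erase htBt, hσeq2, Finset.erase_insert hBnotπ,
          Finset.insert_erase hBtπ]
      · left
        have hBt1 : Bt = {t} := by
          have he : Bt.erase t = ∅ := Finset.not_nonempty_iff_eq_empty.1 hBte
          ext x
          simp only [Finset.mem_singleton]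
          constructor
          · intro hx
            by_contra hxt
            have : x ∈ Bt.erase t := Finset.mem_erase.2 ⟨hxt, hx⟩
            simp [he] at this
          · rintro rfl; exact htBt
        have hσeq2 : σ = π.erase Bt := by
          rw [hσeq, Finset.filter_insert, if_neg hBte, Finset.filter_true_of_mem hπerne]
        rw [hnewP, hσeq2, ← hBt1, Finset.insert_erase hBtπ]
    · rintro (rfl | ⟨B, hB, rfl⟩)
      · exact ⟨hpart_new, hres_new⟩
      · exact ⟨hpart_ins B hB, hres_ins B hB⟩
  -- now sum over the explicit set
  have hnewnot : newP ∉ σ.image insP := by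
    rw [Finset.mem_image]
    rintro ⟨B, hB, hEq⟩
    have h1 : ({t} : Finset (Fin n)) ∈ insP B := hEq ▸ Finset.mem_insert_self _ _
    rcases Finset.mem_insert.1 h1 with h | h
    · obtain ⟨x, hx⟩ := hσne B hB
      have : x ∈ ({t} : Finset (Fin n)) := h ▸ Finset.mem_insert_of_mem hx
      exact htB B hB (Finset.mem_singleton.1 this ▸ hx)
    · exact htB _ (Finset.mem_of_mem_erase h) (Finset.mem_singleton_self t)
  have hinj : ∀ B ∈ σ, ∀ B' ∈ σ, insP B = insP B' → B = B' := by
    intro B hB B' hB' hEq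
    have h1 : insert t B ∈ insP B' := hEq ▸ Finset.mem_insert_self _ _
    rcases Finset.mem_insert.1 h1 with h | h
    · have := congrArg (fun s => s.erase t) h
      simpa [Finset.erase_insert (htB B hB), Finset.erase_insert (htB B' hB')] using this
    · exact (htB _ (Finset.mem_of_mem_erase h) (Finset.mem_insert_self t B)).elim
  rw [hset, Finset.sum_insert hnewnot, Finset.sum_image hinj]
  -- positivity facts
  have hG : 0 < Real.Gamma (1 - a) := Real.Gamma_pos_of_pos (by linarith)
  have hDm : 0 < Dsum γ0 a p m := Dsum_pos hγ ha hp0 m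
  have hDn : 0 < Dsum γ0 a p n := Dsum_pos hγ ha hp0 n
  have hl1 : 1 ≤ l := by
    obtain ⟨B, ⟨hB, _⟩, _⟩ := hσex ⟨0, by omega⟩ (show (0:ℕ) < m from hm1)
    rw [← hl]; exact Finset.card_pos.2 ⟨B, hB⟩
  -- cardinalities
  have hcard_new : newP.card = l + 1 := by
    rw [hnewP, Finset.card_insert_of_notMem htnotσ, hl]
  have hcard_ins : ∀ B ∈ σ, (insP B).card = l := by
    intro B hB
    rw [hinsP]
    simp only
    rw [Finset.card_insert_of_notMem (htinsnot B), Finset.card_erase_of_mem hB, hl]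
    omega
  -- products
  set Pr := ∏ C ∈ σ, Real.Gamma ((C.card : ℝ) - a) / Real.Gamma (1 - a) with hPr
  have hprod_new : (∏ C ∈ newP, Real.Gamma ((C.card : ℝ) - a) / Real.Gamma (1 - a)) = Pr := by
    rw [hnewP, Finset.prod_insert htnotσ, hPr]
    simp [div_self hG.ne']
  have hxa : ∀ B ∈ σ, ((B.card : ℝ) - a) ≠ 0 := by
    intro B hB
    have h1 : 1 ≤ B.card := Finset.card_pos.2 (hσne B hB)
    have h2 : (1:ℝ) ≤ (B.card : ℝ) := by exact_mod_cast h1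
    intro h; linarith
  have hprod_ins : ∀ B ∈ σ,
      (∏ C ∈ insP B, Real.Gamma ((C.card : ℝ) - a) / Real.Gamma (1 - a))
        = ((B.card : ℝ) - a) * Pr := by
    intro B hB
    rw [hinsP]
    simp only
    rw [Finset.prod_insert (htinsnot B), hPr,
      ← Finset.mul_prod_erase σ _ hB, Finset.card_insert_of_notMem (htB B hB)]
    have hx : (((B.card + 1 : ℕ)) : ℝ) - a = ((B.card : ℝ) - a) + 1 := by push_cast; ring
    rw [hx, Real.Gamma_add_one (hxa B hB)]
    ring
  -- sum of block sizes
  have hdisj : ∀ B ∈ σ, ∀ C ∈ σ, B ≠ C → Disjoint B C := by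
    intro B hB C hC hne
    rw [Finset.disjoint_left]
    intro x hxB hxC
    obtain ⟨D, _, huD⟩ := hσex x (hσlt B hB x hxB)
    exact hne ((huD B ⟨hB, hxB⟩).trans (huD C ⟨hC, hxC⟩).symm)
  have hbiU : σ.biUnion id = Finset.univ.filter (fun x : Fin n => (x : ℕ) < m) := by
    ext x
    simp only [Finset.mem_biUnion, id, Finset.mem_filter, Finset.mem_univ, true_and]
    constructor
    · rintro ⟨B, hB, hx⟩; exact hσlt B hB x hx
    · intro hx; obtain ⟨B, ⟨hB, hxB⟩, _⟩ := hσex x hx; exact ⟨B, hB, hxB⟩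
  have hcardfilter : (Finset.univ.filter (fun x : Fin n => (x : ℕ) < m)).card = m := by
    have h1 : Finset.univ.filter (fun x : Fin n => (x : ℕ) < m) = Finset.Iio t := by
      ext x; simp [Finset.mem_Iio, Fin.lt_def, htv]
    rw [h1, Fin.card_Iio]
  have hsum_card : ∑ B ∈ σ, B.card = m := by
    have h1 := Finset.card_biUnion hdisj (t := id)
    rw [hbiU, hcardfilter] at h1
    exact h1.symm
  have hsum_cardR : ∑ B ∈ σ, ((B.card : ℝ) - a) = (m : ℝ) - a * (l : ℝ) := by
    rw [Finset.sum_sub_distrib, ← Nat.cast_sum, hsum_card, Finset.sum_const, hl,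
      nsmul_eq_mul]
    ring
  have hmcast : (m : ℝ) = (n : ℝ) - 1 := by
    rw [hm, Nat.cast_sub (by omega : 1 ≤ n)]; norm_num
  -- assemble
  simp only [crsfW]
  rw [← hPr, hcard_new, hprod_new, hl]
  rw [Finset.sum_congr rfl (fun B hB => by
    rw [hcard_ins B hB, hprod_ins B hB])]
  have hterm : ∀ B ∈ σ,
      γ0 ^ l * p ^ (-(a * (l : ℝ))) * (((B.card : ℝ) - a) * Pr) / Dsum γ0 a p n
        = (γ0 ^ l * p ^ (-(a * (l : ℝ))) * Pr / Dsum γ0 a p n) * ((B.card : ℝ) - a) := by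
    intro B hB; ring
  rw [Finset.sum_congr rfl hterm, ← Finset.mul_sum, hsum_cardR]
  have hrpow : p ^ (-(a * (((l + 1 : ℕ)) : ℝ))) = p ^ (-(a * (l : ℝ))) * p ^ (-a) := by
    have h1 : (-(a * (((l + 1 : ℕ)) : ℝ))) = (-(a * (l : ℝ))) + (-a) := by push_cast; ring
    rw [h1, Real.rpow_add hp0]
  rw [hrpow, hmcast]
  clear_value Pr
  field_simp
  ring
end

section
/- Let 1 ≤ i ≤ n be integers, let γ0 > 0, a < 1, 0 < p < 1 be real, and let σ be a set partition of {1,…,i} with j blocks A_1,…,A_j. Then the sum of w_n(π) over all set partitions π of {1,…,n} whose restriction to {1,…,i} equals σ is R_{n,γ0,a,p}(i,j) · γ0^j · p^{−a·j} · ∏_{k=1}^j Γ(|A_k| − a)/Γ(1 − a) / D_n (the size-dependent exchangeable partition probability function). -/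
open scoped Classical BigOperators

lemma mem_restrictFirst {n i : ℕ} {P : Finset (Finset (Fin n))} {C : Finset (Fin n)} :
    C ∈ restrictFirst n i P ↔ (∃ B ∈ P, B.filter (fun x : Fin n => (x : ℕ) < i) = C) ∧ C.Nonempty := by
  rw [restrictFirst, Finset.mem_filter, Finset.mem_image]

lemma filter_lt_filter_lt {n : ℕ} (B : Finset (Fin n)) {i m : ℕ} (him : i ≤ m) :
    (B.filter fun x : Fin n => (x : ℕ) < m).filter (fun x : Fin n => (x : ℕ) < i)
      = B.filter fun x : Fin n => (x : ℕ) < i := by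
  ext x; simp only [Finset.mem_filter]; constructor
  · rintro ⟨⟨h1, _⟩, h3⟩; exact ⟨h1, h3⟩
  · rintro ⟨h1, h2⟩; exact ⟨⟨h1, lt_of_lt_of_le h2 him⟩, h2⟩

lemma restrictFirst_restrictFirst {n : ℕ} (i : ℕ) (P : Finset (Finset (Fin n))) :
    restrictFirst n i (restrictFirst n (i + 1) P) = restrictFirst n i P := by
  ext C
  simp only [mem_restrictFirst]
  constructor
  · rintro ⟨⟨D, ⟨⟨B, hB, rfl⟩, _⟩, rfl⟩, hne⟩
    exact ⟨⟨B, hB, (filter_lt_filter_lt B (Nat.le_succ i)).symm⟩, hne⟩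
  · rintro ⟨⟨B, hB, rfl⟩, hne⟩
    refine ⟨⟨B.filter (fun x : Fin n => (x : ℕ) < i + 1), ⟨⟨B, hB, rfl⟩, hne.mono ?_⟩,
      filter_lt_filter_lt B (Nat.le_succ i)⟩, hne⟩
    intro x hx
    simp only [Finset.mem_filter] at hx ⊢
    exact ⟨hx.1, by omega⟩

lemma filter_lt_succ_of_mem {n i : ℕ} (hi : i < n) {B : Finset (Fin n)}
    (h : Fin.mk i hi ∈ B) :
    B.filter (fun x : Fin n => (x : ℕ) < i + 1)
      = insert (Fin.mk i hi) (B.filter fun x : Fin n => (x : ℕ) < i) := by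
  ext x
  simp only [Finset.mem_filter, Finset.mem_insert, Fin.ext_iff]
  constructor
  · rintro ⟨hxB, hlt⟩
    by_cases hx : (x : ℕ) = i
    · exact Or.inl hx
    · exact Or.inr ⟨hxB, by omega⟩
  · rintro (hx | ⟨hxB, hlt⟩)
    · have hx' : x = Fin.mk i hi := Fin.ext hx
      subst hx'
      exact ⟨h, by omega⟩
    · exact ⟨hxB, by omega⟩

lemma filter_lt_succ_of_notMem {n i : ℕ} (hi : i < n) {B : Finset (Fin n)}
    (h : Fin.mk i hi ∉ B) :
    B.filter (fun x : Fin n => (x : ℕ) < i + 1) = B.filter fun x : Fin n => (x : ℕ) < i := by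
  ext x
  simp only [Finset.mem_filter]
  constructor
  · rintro ⟨hxB, hlt⟩
    refine ⟨hxB, ?_⟩
    by_cases hx : (x : ℕ) = i
    · have hx' : x = Fin.mk i hi := Fin.ext hx
      subst hx'
      exact absurd hxB h
    · omega
  · rintro ⟨hxB, hlt⟩; exact ⟨hxB, by omega⟩
lemma block_nonempty_on {n i : ℕ} {σ : Finset (Finset (Fin n))} (hσ : IsPartitionOn n i σ)
    {B : Finset (Fin n)} (hB : B ∈ σ) : B.Nonempty := by
  rcases Finset.eq_empty_or_nonempty B with rfl | h
  · exact absurd hB hσ.1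
  · exact h

lemma isPartitionOn_restrictFirst {n i : ℕ} {P : Finset (Finset (Fin n))}
    (hP : IsPartition P) : IsPartitionOn n i (restrictFirst n i P) := by
  refine ⟨?_, ?_, ?_⟩
  · intro h
    exact absurd (mem_restrictFirst.mp h).2 (by simp)
  · intro B hB x hx
    obtain ⟨⟨B', _, rfl⟩, _⟩ := mem_restrictFirst.mp hB
    exact (Finset.mem_filter.mp hx).2
  · intro x hx
    obtain ⟨B, ⟨hBP, hxB⟩, huniq⟩ := hP.2 x
    refine ⟨B.filter (fun y : Fin n => (y : ℕ) < i), ⟨mem_restrictFirst.mpr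
      ⟨⟨B, hBP, rfl⟩, ⟨x, Finset.mem_filter.mpr ⟨hxB, hx⟩⟩⟩,
      Finset.mem_filter.mpr ⟨hxB, hx⟩⟩, ?_⟩
    rintro C ⟨hC, hxC⟩
    obtain ⟨⟨B', hB', rfl⟩, _⟩ := mem_restrictFirst.mp hC
    have : B' = B := huniq B' ⟨hB', (Finset.mem_filter.mp hxC).1⟩
    subst this; rfl

lemma restrictFirst_self {n : ℕ} {P : Finset (Finset (Fin n))} (hP : IsPartition P) :
    restrictFirst n n P = P := by
  ext C
  rw [mem_restrictFirst]
  have hfilt : ∀ B : Finset (Fin n), B.filter (fun x : Fin n => (x : ℕ) < n) = B := by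
    intro B; apply Finset.filter_true_of_mem; intro x _; exact x.isLt
  constructor
  · rintro ⟨⟨B, hB, rfl⟩, _⟩; rwa [hfilt B]
  · intro hC
    refine ⟨⟨C, hC, hfilt C⟩, ?_⟩
    rcases Finset.eq_empty_or_nonempty C with rfl | h
    · exact absurd hC hP.1
    · exact h

lemma isPartition_of_isPartitionOn {n : ℕ} {σ : Finset (Finset (Fin n))}
    (hσ : IsPartitionOn n n σ) : IsPartition σ :=
  ⟨hσ.1, fun x => hσ.2.2 x x.isLt⟩

lemma blocks_disjoint {n i : ℕ} {σ : Finset (Finset (Fin n))} (hσ : IsPartitionOn n i σ)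
    {A A' : Finset (Fin n)} (hA : A ∈ σ) (hA' : A' ∈ σ) (hne : A ≠ A') : Disjoint A A' := by
  rw [Finset.disjoint_left]
  intro x hx hx'
  have hlt := hσ.2.1 A hA x hx
  obtain ⟨B, hB, hu⟩ := hσ.2.2 x hlt
  exact hne ((hu A ⟨hA, hx⟩).trans (hu A' ⟨hA', hx'⟩).symm)

lemma sum_card_blocks {n i : ℕ} (hin : i ≤ n) {σ : Finset (Finset (Fin n))}
    (hσ : IsPartitionOn n i σ) : ∑ A ∈ σ, A.card = i := by
  have hb : σ.biUnion id = Finset.univ.filter (fun x : Fin n => (x : ℕ) < i) := by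
    ext x
    simp only [Finset.mem_biUnion, id, Finset.mem_filter, Finset.mem_univ, true_and]
    constructor
    · rintro ⟨A, hA, hx⟩; exact hσ.2.1 A hA x hx
    · intro hx; obtain ⟨B, ⟨hB, hxB⟩, _⟩ := hσ.2.2 x hx; exact ⟨B, hB, hxB⟩
  have hcard : (Finset.univ.filter (fun x : Fin n => (x : ℕ) < i)).card = i := by
    have hmap : (Finset.univ : Finset (Fin i)).map (Fin.castLEEmb hin)
        = Finset.univ.filter (fun x : Fin n => (x : ℕ) < i) := by
      ext x
      simp only [Finset.mem_map, Finset.mem_univ, true_and, Finset.mem_filter,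
        Fin.castLEEmb, Function.Embedding.coeFn_mk]
      constructor
      · rintro ⟨y, rfl⟩; exact y.isLt
      · intro hx; exact ⟨⟨(x : ℕ), hx⟩, Fin.ext rfl⟩
    rw [← hmap, Finset.card_map, Finset.card_univ, Fintype.card_fin]
  calc ∑ A ∈ σ, A.card = ∑ A ∈ σ, (id A).card := rfl
    _ = (σ.biUnion id).card :=
        (Finset.card_biUnion (fun A hA A' hA' h => blocks_disjoint hσ hA hA' h)).symm
    _ = i := by rw [hb, hcard]
lemma notMem_block_of_partitionOn {n i : ℕ} {σ : Finset (Finset (Fin n))}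
    (hσ : IsPartitionOn n i σ) (hi : i < n) {A : Finset (Fin n)} (hA : A ∈ σ) :
    Fin.mk i hi ∉ A := fun h => absurd (hσ.2.1 A hA _ h) (by simp)

lemma filter_lt_of_partitionOn {n i : ℕ} {σ : Finset (Finset (Fin n))}
    (hσ : IsPartitionOn n i σ) {A : Finset (Fin n)} (hA : A ∈ σ) :
    A.filter (fun x : Fin n => (x : ℕ) < i) = A :=
  Finset.filter_true_of_mem (fun x hx => hσ.2.1 A hA x hx)

lemma isPartitionOn_extPart {n i : ℕ} (hi : i < n) {σ : Finset (Finset (Fin n))}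
    (hσ : IsPartitionOn n i σ) {A : Finset (Fin n)} (hA : A ∈ σ) :
    IsPartitionOn n (i + 1) (insert (insert (Fin.mk i hi) A) (σ.erase A)) := by
  refine ⟨?_, ?_, ?_⟩
  · intro h
    rcases Finset.mem_insert.mp h with h | h
    · exact absurd h.symm (Finset.insert_ne_empty _ _)
    · exact absurd (Finset.mem_of_mem_erase h) hσ.1
  · intro B hB x hx
    rcases Finset.mem_insert.mp hB with rfl | hB
    · rcases Finset.mem_insert.mp hx with rfl | hx
      · simp
      · have := hσ.2.1 A hA x hx; omega
    · have := hσ.2.1 B (Finset.mem_of_mem_erase hB) x hx; omega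
  · intro x hx
    by_cases hxi : (x : ℕ) = i
    · have hxeq : x = Fin.mk i hi := Fin.ext hxi
      subst hxeq
      refine ⟨insert (Fin.mk i hi) A, ⟨Finset.mem_insert_self _ _,
        Finset.mem_insert_self _ _⟩, ?_⟩
      rintro C ⟨hC, hxC⟩
      rcases Finset.mem_insert.mp hC with rfl | hC
      · rfl
      · exact absurd hxC (notMem_block_of_partitionOn hσ hi (Finset.mem_of_mem_erase hC))
    · have hxlt : (x : ℕ) < i := by omega
      obtain ⟨B, ⟨hB, hxB⟩, hu⟩ := hσ.2.2 x hxlt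
      by_cases hBA : B = A
      · subst hBA
        refine ⟨insert (Fin.mk i hi) B, ⟨Finset.mem_insert_self _ _,
          Finset.mem_insert_of_mem hxB⟩, ?_⟩
        rintro C ⟨hC, hxC⟩
        rcases Finset.mem_insert.mp hC with rfl | hC
        · rfl
        · have : C = B := hu C ⟨Finset.mem_of_mem_erase hC, hxC⟩
          exact absurd (this ▸ hC) (Finset.notMem_erase B σ)
      · refine ⟨B, ⟨Finset.mem_insert_of_mem (Finset.mem_erase.mpr ⟨hBA, hB⟩), hxB⟩, ?_⟩
        rintro C ⟨hC, hxC⟩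
        rcases Finset.mem_insert.mp hC with rfl | hC
        · rcases Finset.mem_insert.mp hxC with rfl | hxC
          · simp at hxi
          · exact (hBA ((hu A ⟨hA, hxC⟩).symm ▸ rfl : B = A)).elim
        · exact hu C ⟨Finset.mem_of_mem_erase hC, hxC⟩

lemma isPartitionOn_extNew {n i : ℕ} (hi : i < n) {σ : Finset (Finset (Fin n))}
    (hσ : IsPartitionOn n i σ) :
    IsPartitionOn n (i + 1) (insert {Fin.mk i hi} σ) := by
  refine ⟨?_, ?_, ?_⟩
  · intro h
    rcases Finset.mem_insert.mp h with h | h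
    · exact absurd h.symm (Finset.singleton_ne_empty _)
    · exact absurd h hσ.1
  · intro B hB x hx
    rcases Finset.mem_insert.mp hB with rfl | hB
    · rcases Finset.mem_singleton.mp hx with rfl; simp
    · have := hσ.2.1 B hB x hx; omega
  · intro x hx
    by_cases hxi : (x : ℕ) = i
    · have hxeq : x = Fin.mk i hi := Fin.ext hxi
      subst hxeq
      refine ⟨{Fin.mk i hi}, ⟨Finset.mem_insert_self _ _, Finset.mem_singleton_self _⟩, ?_⟩
      rintro C ⟨hC, hxC⟩
      rcases Finset.mem_insert.mp hC with rfl | hC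
      · rfl
      · exact absurd hxC (notMem_block_of_partitionOn hσ hi hC)
    · have hxlt : (x : ℕ) < i := by omega
      obtain ⟨B, ⟨hB, hxB⟩, hu⟩ := hσ.2.2 x hxlt
      refine ⟨B, ⟨Finset.mem_insert_of_mem hB, hxB⟩, ?_⟩
      rintro C ⟨hC, hxC⟩
      rcases Finset.mem_insert.mp hC with rfl | hC
      · rcases Finset.mem_singleton.mp hxC with rfl; simp at hxi
      · exact hu C ⟨hC, hxC⟩

lemma extBlock_notMem_erase {n i : ℕ} (hi : i < n) {σ : Finset (Finset (Fin n))}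
    (hσ : IsPartitionOn n i σ) (A : Finset (Fin n)) :
    insert (Fin.mk i hi) A ∉ σ.erase A := fun h =>
  absurd (Finset.mem_insert_self _ _)
    (notMem_block_of_partitionOn hσ hi (Finset.mem_of_mem_erase h))

lemma singleton_notMem {n i : ℕ} (hi : i < n) {σ : Finset (Finset (Fin n))}
    (hσ : IsPartitionOn n i σ) : ({Fin.mk i hi} : Finset (Fin n)) ∉ σ := fun h =>
  absurd (Finset.mem_singleton_self _) (notMem_block_of_partitionOn hσ hi h)

lemma card_extPart {n i : ℕ} (hi : i < n) {σ : Finset (Finset (Fin n))}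
    (hσ : IsPartitionOn n i σ) {A : Finset (Fin n)} (hA : A ∈ σ) :
    (insert (insert (Fin.mk i hi) A) (σ.erase A)).card = σ.card := by
  rw [Finset.card_insert_of_notMem (extBlock_notMem_erase hi hσ A),
    Finset.card_erase_of_mem hA]
  have : 0 < σ.card := Finset.card_pos.mpr ⟨A, hA⟩
  omega

lemma card_extNew {n i : ℕ} (hi : i < n) {σ : Finset (Finset (Fin n))}
    (hσ : IsPartitionOn n i σ) : (insert {Fin.mk i hi} σ).card = σ.card + 1 :=
  Finset.card_insert_of_notMem (singleton_notMem hi hσ)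

lemma restrict_extPart {n i : ℕ} (hi : i < n) {σ : Finset (Finset (Fin n))}
    (hσ : IsPartitionOn n i σ) {A : Finset (Fin n)} (hA : A ∈ σ) :
    restrictFirst n i (insert (insert (Fin.mk i hi) A) (σ.erase A)) = σ := by
  have hins : (insert (Fin.mk i hi) A).filter (fun x : Fin n => (x : ℕ) < i) = A := by
    rw [Finset.filter_insert, if_neg (by simp)]
    exact filter_lt_of_partitionOn hσ hA
  ext C
  rw [mem_restrictFirst]
  constructor
  · rintro ⟨⟨B, hB, rfl⟩, hne⟩
    rcases Finset.mem_insert.mp hB with rfl | hB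
    · rw [hins]; exact hA
    · rw [filter_lt_of_partitionOn hσ (Finset.mem_of_mem_erase hB)]
      exact Finset.mem_of_mem_erase hB
  · intro hC
    by_cases hCA : C = A
    · subst hCA
      exact ⟨⟨insert (Fin.mk i hi) C, Finset.mem_insert_self _ _, hins⟩,
        block_nonempty_on hσ hC⟩
    · exact ⟨⟨C, Finset.mem_insert_of_mem (Finset.mem_erase.mpr ⟨hCA, hC⟩),
        filter_lt_of_partitionOn hσ hC⟩, block_nonempty_on hσ hC⟩

lemma restrict_extNew {n i : ℕ} (hi : i < n) {σ : Finset (Finset (Fin n))}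
    (hσ : IsPartitionOn n i σ) :
    restrictFirst n i (insert {Fin.mk i hi} σ) = σ := by
  ext C
  rw [mem_restrictFirst]
  constructor
  · rintro ⟨⟨B, hB, rfl⟩, hne⟩
    rcases Finset.mem_insert.mp hB with rfl | hB
    · exfalso
      obtain ⟨x, hx⟩ := hne
      have := Finset.mem_filter.mp hx
      rcases Finset.mem_singleton.mp this.1 with rfl
      have := this.2; simp at this
    · rw [filter_lt_of_partitionOn hσ hB]; exact hB
  · intro hC
    exact ⟨⟨C, Finset.mem_insert_of_mem hC, filter_lt_of_partitionOn hσ hC⟩,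
      block_nonempty_on hσ hC⟩
lemma extPart_injOn {n i : ℕ} (hi : i < n) {σ : Finset (Finset (Fin n))}
    (hσ : IsPartitionOn n i σ) {A A' : Finset (Fin n)} (hA : A ∈ σ) (hA' : A' ∈ σ)
    (h : insert (insert (Fin.mk i hi) A) (σ.erase A)
        = insert (insert (Fin.mk i hi) A') (σ.erase A')) : A = A' := by
  by_contra hne
  have h1 : A ∈ insert (insert (Fin.mk i hi) A') (σ.erase A') :=
    Finset.mem_insert_of_mem (Finset.mem_erase.mpr ⟨hne, hA⟩)
  rw [← h] at h1
  rcases Finset.mem_insert.mp h1 with h2 | h2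
  · exact notMem_block_of_partitionOn hσ hi hA (h2 ▸ Finset.mem_insert_self _ _)
  · exact Finset.notMem_erase A σ h2

lemma extNew_notMem_image {n i : ℕ} (hi : i < n) {σ : Finset (Finset (Fin n))}
    (hσ : IsPartitionOn n i σ) :
    insert {Fin.mk i hi} σ ∉
      σ.image (fun A => insert (insert (Fin.mk i hi) A) (σ.erase A)) := by
  rw [Finset.mem_image]
  rintro ⟨A, hA, heq⟩
  have h1 : ({Fin.mk i hi} : Finset (Fin n)) ∈ insert (insert (Fin.mk i hi) A) (σ.erase A) :=
    heq ▸ Finset.mem_insert_self _ _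
  rcases Finset.mem_insert.mp h1 with h2 | h2
  · obtain ⟨y, hy⟩ := block_nonempty_on hσ hA
    have : y ∈ ({Fin.mk i hi} : Finset (Fin n)) := h2 ▸ Finset.mem_insert_of_mem hy
    rcases Finset.mem_singleton.mp this with rfl
    exact notMem_block_of_partitionOn hσ hi hA hy
  · exact singleton_notMem hi hσ (Finset.mem_of_mem_erase h2)

lemma restrict_succ_mem {n i : ℕ} (hi : i < n) {π σ : Finset (Finset (Fin n))}
    (hπ : IsPartition π) (hσ : IsPartitionOn n i σ) (hres : restrictFirst n i π = σ) :
    restrictFirst n (i + 1) π ∈ insert (insert {Fin.mk i hi} σ)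
      (σ.image (fun A => insert (insert (Fin.mk i hi) A) (σ.erase A))) := by
  obtain ⟨B0, ⟨hB0, hxB0⟩, hu⟩ := hπ.2 (Fin.mk i hi)
  by_cases hA0ne : (B0.filter (fun x : Fin n => (x : ℕ) < i)).Nonempty
  · set A0 := B0.filter (fun x : Fin n => (x : ℕ) < i) with hA0def
    have hA0σ : A0 ∈ σ := by
      rw [← hres]; exact mem_restrictFirst.mpr ⟨⟨B0, hB0, rfl⟩, hA0ne⟩
    have key : restrictFirst n (i + 1) π = insert (insert (Fin.mk i hi) A0) (σ.erase A0) := by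
      ext C
      rw [mem_restrictFirst]
      constructor
      · rintro ⟨⟨B, hB, rfl⟩, hne⟩
        by_cases hBB0 : B = B0
        · subst hBB0
          rw [filter_lt_succ_of_mem hi hxB0]
          exact Finset.mem_insert_self _ _
        · have hx0B : Fin.mk i hi ∉ B := fun h => hBB0 (hu B ⟨hB, h⟩)
          rw [filter_lt_succ_of_notMem hi hx0B] at hne ⊢
          refine Finset.mem_insert_of_mem (Finset.mem_erase.mpr ⟨?_, ?_⟩)
          · intro heq
            obtain ⟨y, hy⟩ := hA0ne
            have hyB : y ∈ B := (Finset.mem_filter.mp (heq ▸ hy)).1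
            have hyB0 : y ∈ B0 := (Finset.mem_filter.mp hy).1
            obtain ⟨D, _, hDu⟩ := hπ.2 y
            exact hBB0 ((hDu B ⟨hB, hyB⟩).trans (hDu B0 ⟨hB0, hyB0⟩).symm)
          · rw [← hres]; exact mem_restrictFirst.mpr ⟨⟨B, hB, rfl⟩, hne⟩
      · intro hC
        rcases Finset.mem_insert.mp hC with rfl | hC
        · exact ⟨⟨B0, hB0, (filter_lt_succ_of_mem hi hxB0)⟩, Finset.insert_nonempty _ _⟩
        · have hCσ : C ∈ σ := Finset.mem_of_mem_erase hC
          rw [← hres, mem_restrictFirst] at hCσ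
          obtain ⟨⟨B, hB, rfl⟩, hne⟩ := hCσ
          have hBB0 : B ≠ B0 := by
            rintro rfl
            exact (Finset.mem_erase.mp hC).1 rfl
          have hx0B : Fin.mk i hi ∉ B := fun h => hBB0 (hu B ⟨hB, h⟩)
          exact ⟨⟨B, hB, filter_lt_succ_of_notMem hi hx0B⟩, hne⟩
    exact Finset.mem_insert_of_mem (Finset.mem_image.mpr ⟨A0, hA0σ, key.symm⟩)
  · rw [Finset.not_nonempty_iff_eq_empty] at hA0ne
    refine Finset.mem_insert.mpr (Or.inl ?_)
    ext C
    rw [mem_restrictFirst]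
    constructor
    · rintro ⟨⟨B, hB, rfl⟩, hne⟩
      by_cases hBB0 : B = B0
      · subst hBB0
        rw [filter_lt_succ_of_mem hi hxB0, hA0ne]
        exact Finset.mem_insert_self _ _
      · have hx0B : Fin.mk i hi ∉ B := fun h => hBB0 (hu B ⟨hB, h⟩)
        rw [filter_lt_succ_of_notMem hi hx0B] at hne ⊢
        refine Finset.mem_insert_of_mem ?_
        rw [← hres]; exact mem_restrictFirst.mpr ⟨⟨B, hB, rfl⟩, hne⟩
    · intro hC
      rcases Finset.mem_insert.mp hC with rfl | hC
      · refine ⟨⟨B0, hB0, ?_⟩, Finset.singleton_nonempty _⟩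
        rw [filter_lt_succ_of_mem hi hxB0, hA0ne]
        rfl
      · rw [← hres, mem_restrictFirst] at hC
        obtain ⟨⟨B, hB, rfl⟩, hne⟩ := hC
        have hx0B : Fin.mk i hi ∉ B := by
          intro h
          have : B = B0 := hu B ⟨hB, h⟩
          subst this
          exact hne.ne_empty hA0ne
        exact ⟨⟨B, hB, filter_lt_succ_of_notMem hi hx0B⟩, hne⟩
lemma crsf_aux (n : ℕ) (γ0 a p : ℝ) (hγ : 0 < γ0) (ha : a < 1) (hp0 : 0 < p) :
    ∀ d i : ℕ, n - i = d → 1 ≤ i → i ≤ n →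
    ∀ σ : Finset (Finset (Fin n)), IsPartitionOn n i σ →
    ∑ π ∈ (partitionsOf n).filter (fun π => restrictFirst n i π = σ), crsfW γ0 a p n π
      = Rrec γ0 a p n i σ.card * γ0 ^ σ.card * p ^ (-(a * (σ.card : ℝ))) *
          (∏ B ∈ σ, Real.Gamma ((B.card : ℝ) - a) / Real.Gamma (1 - a)) /
            Dsum γ0 a p n := by
  intro d
  induction d with
  | zero =>
    intro i hd hi1 hin σ hσ
    have hieq : i = n := by omega
    subst hieq
    have hσP : IsPartition σ := isPartition_of_isPartitionOn hσ
    have hset : (partitionsOf i).filter (fun π => restrictFirst i i π = σ) = {σ} := by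
      ext π
      simp only [Finset.mem_filter, Finset.mem_singleton, partitionsOf, Finset.mem_univ,
        true_and]
      constructor
      · rintro ⟨hπ, hres⟩; rw [← restrictFirst_self hπ]; exact hres
      · rintro rfl; exact ⟨hσP, restrictFirst_self hσP⟩
    rw [hset, Finset.sum_singleton, crsfW, Rrec, dif_pos (le_refl i)]
    ring
  | succ d ih =>
    intro i hd hi1 hin σ hσ
    have hi' : i < n := by omega
    have hmap : ∀ π ∈ (partitionsOf n).filter (fun π => restrictFirst n i π = σ),
        restrictFirst n (i + 1) π ∈ insert (insert {Fin.mk i hi'} σ)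
          (σ.image (fun A => insert (insert (Fin.mk i hi') A) (σ.erase A))) := by
      intro π hπ
      rw [Finset.mem_filter] at hπ
      have hπP : IsPartition π := by
        have h1 := hπ.1
        rw [partitionsOf, Finset.mem_filter] at h1
        exact h1.2
      exact restrict_succ_mem hi' hπP hσ hπ.2
    rw [← Finset.sum_fiberwise_of_maps_to hmap (crsfW γ0 a p n)]
    have hmemPart : ∀ σ' ∈ insert (insert {Fin.mk i hi'} σ)
        (σ.image (fun A => insert (insert (Fin.mk i hi') A) (σ.erase A))),
        IsPartitionOn n (i + 1) σ' ∧ restrictFirst n i σ' = σ := by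
      intro σ' hσ'
      rcases Finset.mem_insert.mp hσ' with rfl | h
      · exact ⟨isPartitionOn_extNew hi' hσ, restrict_extNew hi' hσ⟩
      · obtain ⟨A, hA, rfl⟩ := Finset.mem_image.mp h
        exact ⟨isPartitionOn_extPart hi' hσ hA, restrict_extPart hi' hσ hA⟩
    have hval : ∀ σ' ∈ insert (insert {Fin.mk i hi'} σ)
        (σ.image (fun A => insert (insert (Fin.mk i hi') A) (σ.erase A))),
        ∑ π ∈ ((partitionsOf n).filter (fun π => restrictFirst n i π = σ)).filter
            (fun π => restrictFirst n (i + 1) π = σ'), crsfW γ0 a p n π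
          = Rrec γ0 a p n (i + 1) σ'.card * γ0 ^ σ'.card * p ^ (-(a * (σ'.card : ℝ))) *
              (∏ B ∈ σ', Real.Gamma ((B.card : ℝ) - a) / Real.Gamma (1 - a)) /
                Dsum γ0 a p n := by
      intro σ' hσ'
      have hfiber : ((partitionsOf n).filter (fun π => restrictFirst n i π = σ)).filter
            (fun π => restrictFirst n (i + 1) π = σ')
          = (partitionsOf n).filter (fun π => restrictFirst n (i + 1) π = σ') := by
        rw [Finset.filter_filter]
        apply Finset.filter_congr
        intro π _
        constructor
        · rintro ⟨_, h2⟩; exact h2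
        · intro h2
          refine ⟨?_, h2⟩
          rw [← restrictFirst_restrictFirst i π, h2, (hmemPart σ' hσ').2]
      rw [hfiber]
      exact ih (i + 1) (by omega) (by omega) (by omega) σ' (hmemPart σ' hσ').1
    rw [Finset.sum_congr rfl hval]
    rw [Finset.sum_insert (extNew_notMem_image hi' hσ),
      Finset.sum_image (fun A hA A' hA' h => extPart_injOn hi' hσ hA hA' h)]
    have hG : Real.Gamma (1 - a) ≠ 0 := (Real.Gamma_pos_of_pos (by linarith)).ne'
    -- evaluate the new-block term
    have hnew : Rrec γ0 a p n (i + 1) (insert {Fin.mk i hi'} σ).card *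
          γ0 ^ (insert {Fin.mk i hi'} σ).card *
          p ^ (-(a * ((insert {Fin.mk i hi'} σ).card : ℝ))) *
          (∏ B ∈ insert {Fin.mk i hi'} σ,
            Real.Gamma ((B.card : ℝ) - a) / Real.Gamma (1 - a)) / Dsum γ0 a p n
        = Rrec γ0 a p n (i + 1) (σ.card + 1) * γ0 ^ (σ.card + 1) *
            (p ^ (-a) * p ^ (-(a * (σ.card : ℝ)))) *
            (∏ B ∈ σ, Real.Gamma ((B.card : ℝ) - a) / Real.Gamma (1 - a)) /
              Dsum γ0 a p n := by
      rw [card_extNew hi' hσ, Finset.prod_insert (singleton_notMem hi' hσ),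
        Finset.card_singleton]
      have hpow : p ^ (-(a * ((σ.card + 1 : ℕ) : ℝ))) = p ^ (-a) * p ^ (-(a * (σ.card : ℝ))) := by
        rw [← Real.rpow_add hp0]
        congr 1
        push_cast
        ring
      rw [hpow]
      have h1 : Real.Gamma ((1 : ℕ) - a) / Real.Gamma (1 - a) = 1 := by
        rw [Nat.cast_one, div_self hG]
      rw [h1, one_mul]
    rw [hnew]
    -- evaluate each existing-block term
    have hterm : ∀ A ∈ σ, Rrec γ0 a p n (i + 1)
          (insert (insert (Fin.mk i hi') A) (σ.erase A)).card *
          γ0 ^ (insert (insert (Fin.mk i hi') A) (σ.erase A)).card *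
          p ^ (-(a * (((insert (insert (Fin.mk i hi') A) (σ.erase A)).card : ℝ)))) *
          (∏ B ∈ insert (insert (Fin.mk i hi') A) (σ.erase A),
            Real.Gamma ((B.card : ℝ) - a) / Real.Gamma (1 - a)) / Dsum γ0 a p n
        = ((A.card : ℝ) - a) * (Rrec γ0 a p n (i + 1) σ.card * γ0 ^ σ.card *
            p ^ (-(a * (σ.card : ℝ))) *
            (∏ B ∈ σ, Real.Gamma ((B.card : ℝ) - a) / Real.Gamma (1 - a)) /
              Dsum γ0 a p n) := by
      intro A hA
      rw [card_extPart hi' hσ hA, Finset.prod_insert (extBlock_notMem_erase hi' hσ A),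
        Finset.card_insert_of_notMem (notMem_block_of_partitionOn hσ hi' hA)]
      have hcA : 1 ≤ A.card := Finset.card_pos.mpr (block_nonempty_on hσ hA)
      have hne0 : (A.card : ℝ) - a ≠ 0 := by
        have : (1 : ℝ) ≤ (A.card : ℝ) := by exact_mod_cast hcA
        nlinarith
      have hGam : Real.Gamma (((A.card + 1 : ℕ) : ℝ) - a)
          = ((A.card : ℝ) - a) * Real.Gamma ((A.card : ℝ) - a) := by
        have hcast : ((A.card + 1 : ℕ) : ℝ) - a = ((A.card : ℝ) - a) + 1 := by
          push_cast; ring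
        rw [hcast, Real.Gamma_add_one hne0]
      rw [hGam]
      have hprod : Real.Gamma ((A.card : ℝ) - a) / Real.Gamma (1 - a) *
            ∏ B ∈ σ.erase A, Real.Gamma ((B.card : ℝ) - a) / Real.Gamma (1 - a)
          = ∏ B ∈ σ, Real.Gamma ((B.card : ℝ) - a) / Real.Gamma (1 - a) :=
        Finset.mul_prod_erase σ (fun B => Real.Gamma ((B.card : ℝ) - a) / Real.Gamma (1 - a)) hA
      rw [← hprod]
      ring
    rw [Finset.sum_congr rfl hterm, ← Finset.sum_mul]
    have hsumc : ∑ A ∈ σ, ((A.card : ℝ) - a) = (i : ℝ) - a * (σ.card : ℝ) := by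
      rw [Finset.sum_sub_distrib, Finset.sum_const, nsmul_eq_mul]
      have : ∑ A ∈ σ, (A.card : ℝ) = (i : ℝ) := by
        rw [← Nat.cast_sum]
        exact_mod_cast congrArg (Nat.cast : ℕ → ℝ) (sum_card_blocks (le_of_lt hi') hσ)
      rw [this]
      ring
    rw [hsumc]
    have hR : Rrec γ0 a p n i σ.card = ((i : ℝ) - a * (σ.card : ℝ)) *
          Rrec γ0 a p n (i + 1) σ.card
        + γ0 * p ^ (-a) * Rrec γ0 a p n (i + 1) (σ.card + 1) := by
      rw [Rrec, dif_neg (by omega)]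
    rw [hR]
    field_simp
    ring
/-- Size-dependent exchangeable partition probability function: for 1 ≤ i ≤ n and
a set partition σ of {1,…,i} with j blocks A_1,…,A_j, the sum of w_n(π) over all
set partitions π of {1,…,n} whose restriction to {1,…,i} equals σ is
R_{n,γ0,a,p}(i,j) · γ0^j · p^{−a·j} · ∏_{k=1}^j Γ(|A_k|−a)/Γ(1−a) / D_n. -/
theorem crsf_size_dependent_eppf (i n : ℕ) (hi : 1 ≤ i) (hin : i ≤ n)
    (γ0 a p : ℝ) (hγ : 0 < γ0) (ha : a < 1) (hp0 : 0 < p) (hp1 : p < 1)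
    (σ : Finset (Finset (Fin n))) (hσ : IsPartitionOn n i σ)
    (j : ℕ) (hj : σ.card = j) :
    ∑ π ∈ (partitionsOf n).filter (fun π => restrictFirst n i π = σ),
        crsfW γ0 a p n π
      = Rrec γ0 a p n i j * γ0 ^ j * p ^ (-(a * (j : ℝ))) *
          (∏ B ∈ σ, Real.Gamma ((B.card : ℝ) - a) / Real.Gamma (1 - a)) /
            Dsum γ0 a p n := by
  subst hj
  exact crsf_aux n γ0 a p hγ ha hp0 (n - i) i rfl hi hin σ hσ
end
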